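/- arXiv:2405.09381 — 7 statements merged into one kernel-verified Lean document; each statement's English description precedes it below -/
import Mathlib

section
/- The p-barycenter map x̄_p : ℝ^{Nd} → ℝ^d, sending (x₁,…,x_N) to the unique minimizer of z ↦ Σᵢ λᵢ |xᵢ - z|^p, is continuous. -/
open Finset Filter Topology

section aux

variable {E : Type*} [NormedAddCommGroup E] [InnerProductSpace ℝ E]

lemma aux_term_strict (p : ℝ) (hp : 1 < p) (a z₁ z₂ : E) (h : z₁ ≠ z₂) :
    ‖a - midpoint ℝ z₁ z₂‖ ^ p < (‖a - z₁‖ ^ p + ‖a - z₂‖ ^ p) / 2 := by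
  have hp0 : (0:ℝ) < p := lt_trans one_pos hp
  set u := a - z₁ with hu
  set v := a - z₂ with hv
  have huv : u ≠ v := fun he => h (sub_right_injective he)
  have hm : a - midpoint ℝ z₁ z₂ = (2⁻¹ : ℝ) • (u + v) := by
    rw [midpoint_eq_smul_add, invOf_eq_inv, hu, hv]
    module
  have hnm : ‖a - midpoint ℝ z₁ z₂‖ = ‖u + v‖ / 2 := by
    rw [hm, norm_smul]
    simp [div_eq_inv_mul]
  rw [hnm]
  rcases eq_or_ne ‖u‖ ‖v‖ with hr | hr
  · -- equal norms : use strict convexity of the space via parallelogram law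
    have hr0 : 0 < ‖u‖ := by
      rcases (norm_nonneg u).lt_or_eq with h' | h'
      · exact h'
      · exfalso
        have hu0 : u = 0 := norm_eq_zero.1 h'.symm
        have hv0 : v = 0 := norm_eq_zero.1 (by rw [← hr, ← h'])
        exact huv (hu0.trans hv0.symm)
    have hpar := parallelogram_law_with_norm ℝ u v
    have hsub : 0 < ‖u - v‖ := norm_sub_pos_iff.2 huv
    have hlt : ‖u + v‖ < 2 * ‖u‖ := by
      nlinarith [norm_nonneg (u + v), norm_nonneg u]
    have hlt2 : ‖u + v‖ / 2 < ‖u‖ := by linarith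
    have := Real.rpow_lt_rpow (by positivity) hlt2 hp0
    rw [← hr]
    have h2 : (‖u‖ ^ p + ‖u‖ ^ p) / 2 = ‖u‖ ^ p := by ring
    rw [h2]
    exact this
  · -- distinct norms : use strict convexity of rpow
    have key := (strictConvexOn_rpow hp).2 (Set.mem_Ici.2 (norm_nonneg u))
      (Set.mem_Ici.2 (norm_nonneg v)) hr (by norm_num : (0:ℝ) < 1/2)
      (by norm_num : (0:ℝ) < 1/2) (by norm_num)
    simp only [smul_eq_mul] at key
    have htri : ‖u + v‖ / 2 ≤ 1/2 * ‖u‖ + 1/2 * ‖v‖ := by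
      have := norm_add_le u v
      linarith
    have h1 : (‖u + v‖ / 2) ^ p ≤ (1/2 * ‖u‖ + 1/2 * ‖v‖) ^ p :=
      Real.rpow_le_rpow (by positivity) htri hp0.le
    calc (‖u + v‖ / 2) ^ p ≤ (1/2 * ‖u‖ + 1/2 * ‖v‖) ^ p := h1
      _ < 1/2 * ‖u‖ ^ p + 1/2 * ‖v‖ ^ p := key
      _ = (‖u‖ ^ p + ‖v‖ ^ p) / 2 := by ring

end aux

/-- the `p`-barycenter map `(x₁,…,x_N) ↦ x̄_p(x)` is continuous. -/
theorem p_barycenter_continuous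
    (d N : ℕ) (hd : 1 ≤ d) (hN : 1 ≤ N) (p : ℝ) (hp : 1 < p)
    (l : Fin N → ℝ) (hl : ∀ i, 0 < l i) (hsum : ∑ i, l i = 1)
    (bar : (Fin N → EuclideanSpace ℝ (Fin d)) → EuclideanSpace ℝ (Fin d))
    (hbar : ∀ x, ∀ w : EuclideanSpace ℝ (Fin d),
      ∑ i, l i * ‖x i - bar x‖ ^ p ≤ ∑ i, l i * ‖x i - w‖ ^ p) :
    Continuous bar := by
  have hp0 : (0:ℝ) < p := lt_trans one_pos hp
  set F : (Fin N → EuclideanSpace ℝ (Fin d)) × EuclideanSpace ℝ (Fin d) → ℝ :=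
    fun q => ∑ i, l i * ‖q.1 i - q.2‖ ^ p with hF
  have hbar' : ∀ x w, F (x, bar x) ≤ F (x, w) := hbar
  have hne : (Finset.univ : Finset (Fin N)).Nonempty := ⟨⟨0, hN⟩, Finset.mem_univ _⟩
  -- strict midpoint inequality for F
  have hmid : ∀ (x : Fin N → EuclideanSpace ℝ (Fin d)) (z₁ z₂ : EuclideanSpace ℝ (Fin d)),
      z₁ ≠ z₂ → F (x, midpoint ℝ z₁ z₂) < (F (x, z₁) + F (x, z₂)) / 2 := by
    intro x z₁ z₂ hzz
    have hterm : ∀ i ∈ Finset.univ, l i * ‖x i - midpoint ℝ z₁ z₂‖ ^ p <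
        l i * ((‖x i - z₁‖ ^ p + ‖x i - z₂‖ ^ p) / 2) := fun i _ =>
      mul_lt_mul_of_pos_left (aux_term_strict p hp (x i) z₁ z₂ hzz) (hl i)
    have hsum2 := Finset.sum_lt_sum_of_nonempty hne hterm
    calc F (x, midpoint ℝ z₁ z₂)
        < ∑ i, l i * ((‖x i - z₁‖ ^ p + ‖x i - z₂‖ ^ p) / 2) := hsum2
      _ = (F (x, z₁) + F (x, z₂)) / 2 := by
          show _ = (∑ i, l i * ‖x i - z₁‖ ^ p + ∑ i, l i * ‖x i - z₂‖ ^ p) / 2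
          rw [← Finset.sum_add_distrib, Finset.sum_div]
          exact Finset.sum_congr rfl fun i _ => by ring
  -- uniqueness of the minimizer
  have huniq : ∀ (x : Fin N → EuclideanSpace ℝ (Fin d)) (z : EuclideanSpace ℝ (Fin d)),
      (∀ w, F (x, z) ≤ F (x, w)) → z = bar x := by
    intro x z hz
    by_contra hzz
    have h1 := hz (midpoint ℝ z (bar x))
    have h2 := hbar' x (midpoint ℝ z (bar x))
    have h3 := hz (bar x)
    have h5 := hmid x z (bar x) hzz
    linarith
  -- continuity of F
  have hFcont : Continuous F := by
    refine continuous_finset_sum _ fun i _ => continuous_const.mul ?_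
    exact (Continuous.rpow_const
      (((continuous_apply i).comp continuous_fst).sub continuous_snd).norm
      fun _ => Or.inr hp0.le)
  -- a bound on bar
  set i₀ : Fin N := ⟨0, hN⟩ with hi₀
  set g : (Fin N → EuclideanSpace ℝ (Fin d)) → ℝ :=
    fun x => ‖x i₀‖ + ((∑ i, l i * ‖x i‖ ^ p) * (l i₀)⁻¹) ^ p⁻¹ with hg
  have hgbound : ∀ x, ‖bar x‖ ≤ g x := by
    intro x
    have h0 := hbar x 0
    simp only [sub_zero] at h0
    have hsingle : l i₀ * ‖x i₀ - bar x‖ ^ p ≤ ∑ i, l i * ‖x i - bar x‖ ^ p :=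
      Finset.single_le_sum (f := fun i => l i * ‖x i - bar x‖ ^ p)
        (fun i _ => mul_nonneg (hl i).le (Real.rpow_nonneg (norm_nonneg _) _)) (Finset.mem_univ i₀)
    have hC : ‖x i₀ - bar x‖ ^ p ≤ (∑ i, l i * ‖x i‖ ^ p) * (l i₀)⁻¹ := by
      rw [← div_eq_mul_inv, le_div_iff₀ (hl i₀)]
      calc ‖x i₀ - bar x‖ ^ p * l i₀ = l i₀ * ‖x i₀ - bar x‖ ^ p := by ring
        _ ≤ _ := hsingle.trans h0
    have ht : ‖x i₀ - bar x‖ ≤ ((∑ i, l i * ‖x i‖ ^ p) * (l i₀)⁻¹) ^ p⁻¹ := by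
      have := Real.rpow_le_rpow (by positivity) hC (by positivity : (0:ℝ) ≤ p⁻¹)
      rwa [Real.rpow_rpow_inv (norm_nonneg _) hp0.ne'] at this
    have htri : ‖bar x‖ ≤ ‖x i₀‖ + ‖x i₀ - bar x‖ := by
      have h6 := norm_sub_le (x i₀) (x i₀ - bar x)
      simp only [sub_sub_cancel] at h6
      linarith
    exact htri.trans (by rw [hg]; exact add_le_add (le_refl _) ht)
  have hgcont : Continuous g := by
    refine ((continuous_apply i₀).norm.add ?_)
    refine Continuous.rpow_const ?_ fun _ => Or.inr (by positivity)
    exact (continuous_finset_sum _ fun i _ => continuous_const.mul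
      ((Continuous.rpow_const (continuous_apply i).norm fun _ => Or.inr hp0.le))).mul
      continuous_const
  -- sequential continuity
  rw [continuous_iff_continuousAt]
  intro a
  rw [ContinuousAt]
  apply tendsto_of_subseq_tendsto
  intro ns hns
  have hgB : BddAbove (Set.range fun n => g (ns n)) :=
    ((hgcont.tendsto a).comp hns).bddAbove_range
  obtain ⟨M, hM⟩ := hgB
  have hball : ∀ n, bar (ns n) ∈ Metric.closedBall (0 : EuclideanSpace ℝ (Fin d)) M := by
    intro n
    rw [Metric.mem_closedBall, dist_zero_right]
    exact (hgbound (ns n)).trans (hM ⟨n, rfl⟩)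
  obtain ⟨z, _, φ, hφ, hz⟩ :=
    tendsto_subseq_of_bounded Metric.isBounded_closedBall hball
  have hyφ : Tendsto (fun n => ns (φ n)) atTop (𝓝 a) := hns.comp hφ.tendsto_atTop
  have hz' : Tendsto (fun n => bar (ns (φ n))) atTop (𝓝 z) := hz
  have hpair : Tendsto (fun n => (ns (φ n), bar (ns (φ n)))) atTop (𝓝 (a, z)) :=
    hyφ.prodMk_nhds hz'
  have hzmin : ∀ w, F (a, z) ≤ F (a, w) := by
    intro w
    have h1 : Tendsto (fun n => F (ns (φ n), bar (ns (φ n)))) atTop (𝓝 (F (a, z))) :=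
      (hFcont.tendsto _).comp hpair
    have h2 : Tendsto (fun n => F (ns (φ n), w)) atTop (𝓝 (F (a, w))) :=
      (hFcont.tendsto _).comp (hyφ.prodMk_nhds tendsto_const_nhds)
    exact le_of_tendsto_of_tendsto' h1 h2 fun n => hbar' (ns (φ n)) w
  have hzeq : z = bar a := huniq a z hzmin
  exact ⟨φ, hzeq ▸ hz'⟩
end

section
/- For every x = (x₁,…,x_N) ∈ ℝ^{Nd}, the set of limit points of the family {x̄_p(x)}_{p∈(1,∞)} as p → ∞ is nonempty, and every such limit point is a minimizer of z ↦ max_{i=1,…,N} |xᵢ - z|. -/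
open Finset Filter

/-- the family `p ↦ x̄_p(x)` has cluster points as `p → ∞`, and
every cluster point minimizes `z ↦ max_i ‖xᵢ - z‖`. -/
theorem p_barycenter_limit_points_p_to_infty
    (d N : ℕ) (hd : 1 ≤ d) (hN : 1 ≤ N)
    (l : Fin N → ℝ) (hl : ∀ i, 0 < l i) (hsum : ∑ i, l i = 1)
    (x : Fin N → EuclideanSpace ℝ (Fin d))
    (bar : ℝ → EuclideanSpace ℝ (Fin d))
    (hbar : ∀ p : ℝ, 1 < p → ∀ w : EuclideanSpace ℝ (Fin d),
      ∑ i, l i * ‖x i - bar p‖ ^ p ≤ ∑ i, l i * ‖x i - w‖ ^ p) :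
    (∃ L : EuclideanSpace ℝ (Fin d), MapClusterPt L atTop bar) ∧
    (∀ L : EuclideanSpace ℝ (Fin d), MapClusterPt L atTop bar →
      ∀ w : EuclideanSpace ℝ (Fin d),
        (⨆ i, ‖x i - L‖) ≤ ⨆ i, ‖x i - w‖) := by
  have hNe : Nonempty (Fin N) := ⟨⟨0, hN⟩⟩
  set m : EuclideanSpace ℝ (Fin d) → ℝ := fun z => ⨆ i, ‖x i - z‖ with hm
  have hbdd : ∀ z : EuclideanSpace ℝ (Fin d),
      BddAbove (Set.range fun i => ‖x i - z‖) :=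
    fun z => Set.Finite.bddAbove (Set.finite_range _)
  have hle : ∀ z j, ‖x j - z‖ ≤ m z := fun z j => le_ciSup (hbdd z) j
  have hm_nonneg : ∀ z, 0 ≤ m z := fun z =>
    le_trans (norm_nonneg _) (hle z (Classical.arbitrary _))
  have hl_le1 : ∀ j, l j ≤ 1 := fun j => by
    rw [← hsum]; exact Finset.single_le_sum (fun i _ => (hl i).le) (Finset.mem_univ j)
  -- key inequality
  have key : ∀ p : ℝ, 1 < p → ∀ w, ∀ j, ‖x j - bar p‖ ≤ m w / l j ^ (1/p) := by
    intro p hp w j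
    have hp0 : (0:ℝ) < p := lt_trans one_pos hp
    have hsum_le : ∑ i, l i * ‖x i - bar p‖ ^ p ≤ m w ^ p := by
      calc ∑ i, l i * ‖x i - bar p‖ ^ p ≤ ∑ i, l i * ‖x i - w‖ ^ p := hbar p hp w
        _ ≤ ∑ i, l i * m w ^ p := by
            refine Finset.sum_le_sum fun i _ => ?_
            exact mul_le_mul_of_nonneg_left
              (Real.rpow_le_rpow (norm_nonneg _) (hle w i) hp0.le) (hl i).le
        _ = m w ^ p := by rw [← Finset.sum_mul, hsum, one_mul]
    have hj : l j * ‖x j - bar p‖ ^ p ≤ m w ^ p := by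
      refine le_trans ?_ hsum_le
      exact Finset.single_le_sum
        (fun i _ => mul_nonneg (hl i).le (Real.rpow_nonneg (norm_nonneg (x i - bar p)) p))
        (Finset.mem_univ j)
    have h2 : ‖x j - bar p‖ ^ p ≤ m w ^ p / l j := by
      rw [le_div_iff₀ (hl j)]; linarith [hj]
    have h3 : (‖x j - bar p‖ ^ p) ^ (1/p) ≤ (m w ^ p / l j) ^ (1/p) :=
      Real.rpow_le_rpow (Real.rpow_nonneg (norm_nonneg _) _) h2 (by positivity)
    have e1 : (‖x j - bar p‖ ^ p) ^ (1/p) = ‖x j - bar p‖ := by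
      rw [← Real.rpow_mul (norm_nonneg _), mul_one_div_cancel hp0.ne', Real.rpow_one]
    have e2 : (m w ^ p / l j) ^ (1/p) = m w / l j ^ (1/p) := by
      rw [Real.div_rpow (Real.rpow_nonneg (hm_nonneg w) _) (hl j).le,
          ← Real.rpow_mul (hm_nonneg w), mul_one_div_cancel hp0.ne', Real.rpow_one]
    rw [e1, e2] at h3
    exact h3
  -- l j ^ (1/p) → 1
  have hl1 : ∀ j, Tendsto (fun p : ℝ => (l j) ^ (1/p)) atTop (nhds 1) := by
    intro j
    have h0 : Tendsto (fun p : ℝ => 1/p) atTop (nhds (0:ℝ)) := by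
      simpa [one_div] using (tendsto_inv_atTop_zero : Tendsto (fun p : ℝ => p⁻¹) atTop (nhds 0))
    have h1 : Tendsto (fun p : ℝ => Real.exp (Real.log (l j) * (1/p))) atTop (nhds 1) := by
      have h2 : Tendsto (fun p : ℝ => Real.log (l j) * (1/p)) atTop (nhds 0) := by
        simpa using h0.const_mul (Real.log (l j))
      have := (Real.continuous_exp.tendsto 0).comp h2
      simpa [Function.comp_def] using this
    exact h1.congr fun p => (Real.rpow_def_of_pos (hl j) _).symm
  constructor
  · -- existence of a cluster point
    set j0 : Fin N := ⟨0, hN⟩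
    set C : ℝ := m (x j0) / l j0 with hC
    have hmem : ∀ᶠ p in atTop, bar p ∈ Metric.closedBall (x j0) C := by
      filter_upwards [eventually_gt_atTop (1:ℝ)] with p hp
      have h1 : ‖x j0 - bar p‖ ≤ m (x j0) / l j0 ^ (1/p) := key p hp (x j0) j0
      have hlp : l j0 ≤ l j0 ^ (1/p) := by
        have h1p : 1/p ≤ 1 := by
          rw [div_le_one (lt_trans one_pos hp)]; exact hp.le
        calc l j0 = l j0 ^ (1:ℝ) := (Real.rpow_one _).symm
          _ ≤ l j0 ^ (1/p) := Real.rpow_le_rpow_of_exponent_ge (hl j0) (hl_le1 j0) h1p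
      have h2 : m (x j0) / l j0 ^ (1/p) ≤ C :=
        div_le_div_of_nonneg_left (hm_nonneg _) (hl j0) hlp
      rw [Metric.mem_closedBall, dist_eq_norm, ← norm_sub_rev]
      exact le_trans h1 h2
    have hcomp : IsCompact (Metric.closedBall (x j0) C) := isCompact_closedBall _ _
    have hF : Filter.map bar atTop ≤ Filter.principal (Metric.closedBall (x j0) C) :=
      le_principal_iff.mpr (mem_map.mpr hmem)
    obtain ⟨L, -, hL⟩ := hcomp.exists_clusterPt hF
    exact ⟨L, hL⟩
  · -- every cluster point minimizes
    intro L hL w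
    refine le_of_forall_pos_le_add fun ε hε => ?_
    obtain ⟨j, hj⟩ := Finite.exists_max (fun i => ‖x i - L‖)
    have hmL : m L ≤ ‖x j - L‖ := ciSup_le hj
    -- eventually the bound holds
    have hev : ∀ᶠ p in atTop, ‖x j - bar p‖ < m w + ε/2 := by
      have ht : Tendsto (fun p : ℝ => m w / l j ^ (1/p)) atTop (nhds (m w)) := by
        have ht0 : Tendsto (fun p : ℝ => m w / l j ^ (1/p)) atTop (nhds (m w / 1)) :=
          (tendsto_const_nhds : Tendsto (fun _ : ℝ => m w) atTop (nhds (m w))).div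
            (hl1 j) one_ne_zero
        simpa using ht0
      have hlt : m w < m w + ε/2 := by linarith
      filter_upwards [ht.eventually_lt_const hlt, eventually_gt_atTop (1:ℝ)] with p h1 h2
      exact lt_of_le_of_lt (key p h2 w j) h1
    -- frequently the value is close to L
    have hU : {z : EuclideanSpace ℝ (Fin d) | ‖x j - L‖ - ε/2 < ‖x j - z‖} ∈ nhds L := by
      have hopen : IsOpen {z : EuclideanSpace ℝ (Fin d) | ‖x j - L‖ - ε/2 < ‖x j - z‖} :=
        isOpen_lt continuous_const ((continuous_const.sub continuous_id).norm)
      exact hopen.mem_nhds (by simp; linarith)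
    have hfreq : ∃ᶠ p in atTop, bar p ∈
        {z : EuclideanSpace ℝ (Fin d) | ‖x j - L‖ - ε/2 < ‖x j - z‖} :=
      (mapClusterPt_iff_frequently.mp hL) _ hU
    obtain ⟨p, hp1, hp2⟩ := (hfreq.and_eventually hev).exists
    have : m L ≤ m w + ε := by
      have := hp1
      simp only [Set.mem_setOf_eq] at this
      linarith [hmL]
    exact this
end

section
/- For every x = (x₁,…,x_N) ∈ ℝ^{Nd}, every limit point of x̄_p(x) as p → 1⁺ is a minimizer of z ↦ Σᵢ λᵢ |xᵢ - z|. -/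
open Finset Filter

/-- every cluster point of `x̄_p(x)` as `p → 1⁺` minimizes
`z ↦ ∑ i, λᵢ ‖xᵢ - z‖`. -/
theorem p_barycenter_limit_points_p_to_one
    (d N : ℕ) (hd : 1 ≤ d) (hN : 1 ≤ N)
    (l : Fin N → ℝ) (hl : ∀ i, 0 < l i) (hsum : ∑ i, l i = 1)
    (x : Fin N → EuclideanSpace ℝ (Fin d))
    (bar : ℝ → EuclideanSpace ℝ (Fin d))
    (hbar : ∀ p : ℝ, 1 < p → ∀ w : EuclideanSpace ℝ (Fin d),
      ∑ i, l i * ‖x i - bar p‖ ^ p ≤ ∑ i, l i * ‖x i - w‖ ^ p) :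
    ∀ L : EuclideanSpace ℝ (Fin d), MapClusterPt L (nhdsWithin 1 (Set.Ioi 1)) bar →
      ∀ w : EuclideanSpace ℝ (Fin d),
        ∑ i, l i * ‖x i - L‖ ≤ ∑ i, l i * ‖x i - w‖ := by
  intro L hL w
  set F := nhdsWithin (1:ℝ) (Set.Ioi 1) with hF
  set H := F ⊓ Filter.comap bar (nhds L) with hH
  have hne : H.NeBot := by
    have h1 : (nhds L ⊓ Filter.map bar F).NeBot := hL
    have h2 : (Filter.map bar H).NeBot := by
      rw [hH, Filter.push_pull]
      rwa [inf_comm] at h1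
    exact Filter.NeBot.of_map h2
  have hp1 : Tendsto (fun p : ℝ => p) H (nhds 1) := by
    have : H ≤ nhds 1 := le_trans inf_le_left (nhdsWithin_le_nhds)
    exact this
  have hbarT : Tendsto bar H (nhds L) := by
    rw [Filter.tendsto_iff_comap]
    exact inf_le_right
  have key : ∀ (z : EuclideanSpace ℝ (Fin d)) (g : ℝ → EuclideanSpace ℝ (Fin d)),
      Tendsto g H (nhds z) →
      Tendsto (fun p : ℝ => ∑ i, l i * ‖x i - g p‖ ^ p) H
        (nhds (∑ i, l i * ‖x i - z‖)) := by
    intro z g hg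
    have : Tendsto (fun p : ℝ => ∑ i, l i * ‖x i - g p‖ ^ p) H
        (nhds (∑ i, l i * ‖x i - z‖ ^ (1:ℝ))) := by
      refine tendsto_finset_sum _ (fun i _ => Tendsto.const_mul _ ?_)
      have hpair : Tendsto (fun p : ℝ => (‖x i - g p‖, p)) H
          (nhds (‖x i - z‖, 1)) := by
        refine Tendsto.prodMk_nhds ?_ hp1
        exact (continuous_norm.tendsto _).comp (tendsto_const_nhds.sub hg)
      have hc : ContinuousAt (fun q : ℝ × ℝ => q.1 ^ q.2) (‖x i - z‖, 1) :=
        Real.continuousAt_rpow (‖x i - z‖, 1) (Or.inr one_pos)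
      exact hc.tendsto.comp hpair
    simpa [Real.rpow_one] using this
  have hLHS := key L bar hbarT
  have hRHS := key w (fun _ => w) tendsto_const_nhds
  have hev : ∀ᶠ p in H, ∑ i, l i * ‖x i - bar p‖ ^ p ≤ ∑ i, l i * ‖x i - w‖ ^ p := by
    have hmem : ∀ᶠ p in H, p ∈ Set.Ioi (1:ℝ) :=
      Filter.Eventually.filter_mono inf_le_left self_mem_nhdsWithin
    exact hmem.mono (fun p hp => hbar p hp w)
  exact le_of_tendsto_of_tendsto hLHS hRHS hev
end

section
/- If γ_p is a minimizer of the multi-marginal problem ∫ c_p dγ over Π(μ₁,…,μ_N), then the pushforward ν_p := (x̄_p)_# γ_p is a minimizer of ν ↦ Σᵢ λᵢ W_p^p(μᵢ, ν), and moreover γᵢ := (πᵢ, x̄_p)_# γ_p is an optimal plan for W_p(μᵢ, ν_p) for every i. -/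
open Finset MeasureTheory
open scoped ENNReal

section Aux

open ProbabilityTheory

/-- Measurability of a finite product of measure-valued measurable maps. -/
lemma aux_measurable_measurePi {ι : Type*} [Fintype ι] {α β : Type*} [MeasurableSpace α]
    [MeasurableSpace β] (κ : ι → α → Measure β) (hκ : ∀ i, Measurable (κ i))
    (hprob : ∀ i a, IsProbabilityMeasure (κ i a)) :
    Measurable (fun a => Measure.pi (fun i => κ i a)) := by
  rw [Measure.measurable_measure]
  intro s hs
  refine MeasurableSpace.induction_on_inter
    (C := fun s _ => Measurable fun a => Measure.pi (fun i => κ i a) s)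
    generateFrom_pi.symm isPiSystem_pi ?_ ?_ ?_ ?_ s hs
  · simp only [measure_empty]; exact measurable_const
  · rintro _ ⟨t, ht, rfl⟩
    have he : ∀ a, Measure.pi (fun i => κ i a) (Set.pi Set.univ t) = ∏ i, κ i a (t i) := by
      intro a
      haveI := fun i => hprob i a
      exact Measure.pi_pi _ _
    simp_rw [he]
    exact Finset.measurable_prod _ fun i _ =>
      (Measure.measurable_coe (ht i (Set.mem_univ i))).comp (hκ i)
  · intro t ht h
    have he : ∀ a, Measure.pi (fun i => κ i a) tᶜ = 1 - Measure.pi (fun i => κ i a) t := by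
      intro a
      haveI := fun i => hprob i a
      rw [measure_compl ht (measure_ne_top _ _), measure_univ]
    simp_rw [he]
    exact measurable_const.sub h
  · intro f hd hm hC
    simp_rw [measure_iUnion hd hm]
    exact Measurable.ennreal_tsum hC

/-- Marginal of a finite product of probability measures. -/
lemma aux_pi_map_eval {ι : Type*} [Fintype ι] [DecidableEq ι] {β : Type*} [MeasurableSpace β]
    (m : ι → Measure β) [∀ i, IsProbabilityMeasure (m i)] (i : ι) :
    (Measure.pi m).map (fun x => x i) = m i := by
  ext s hs
  rw [Measure.map_apply (measurable_pi_apply i) hs]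
  have h1 : (fun x : ∀ _ : ι, β => x i) ⁻¹' s
      = Set.pi Set.univ (Function.update (fun _ => Set.univ) i s) := Set.eval_preimage
  rw [h1, Measure.pi_pi,
    Finset.prod_eq_single i (fun j _ hj => by simp [Function.update_of_ne hj]) (by simp)]
  simp

end Aux

/-- The `p`-th power Wasserstein cost `W_p^p(μ,ν)` on `ℝ^d`. -/
noncomputable def wassersteinPPow (d : ℕ) (p : ℝ)
    (μ ν : Measure (EuclideanSpace ℝ (Fin d))) : ℝ≥0∞ :=
  ⨅ η : {η : Measure (EuclideanSpace ℝ (Fin d) × EuclideanSpace ℝ (Fin d)) //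
      η.map Prod.fst = μ ∧ η.map Prod.snd = ν},
    ∫⁻ q, ENNReal.ofReal (‖q.1 - q.2‖ ^ p) ∂(η.1)

/-- if `γ_p` minimizes the multi-marginal problem, then
`ν_p = (x̄_p)_# γ_p` minimizes `ν ↦ ∑ i, λᵢ W_p^p(μᵢ,ν)`, and
`γᵢ = (πᵢ, x̄_p)_# γ_p` is an optimal plan for `W_p(μᵢ, ν_p)` for every `i`. -/
theorem pushforward_of_multimarginal_optimal_is_barycenter
    (d N : ℕ) (hd : 1 ≤ d) (hN : 1 ≤ N) (p : ℝ) (hp : 1 < p)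
    (l : Fin N → ℝ) (hl : ∀ i, 0 < l i) (hsum : ∑ i, l i = 1)
    (μ : Fin N → Measure (EuclideanSpace ℝ (Fin d)))
    (hprob : ∀ i, IsProbabilityMeasure (μ i))
    (hmom : ∀ i, ∫⁻ y, ENNReal.ofReal (‖y‖ ^ p) ∂(μ i) < ⊤)
    (bar : (Fin N → EuclideanSpace ℝ (Fin d)) → EuclideanSpace ℝ (Fin d))
    (hbar : ∀ x, ∀ w : EuclideanSpace ℝ (Fin d),
      ∑ i, l i * ‖x i - bar x‖ ^ p ≤ ∑ i, l i * ‖x i - w‖ ^ p)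
    (hbarm : Measurable bar)
    (γp : Measure (Fin N → EuclideanSpace ℝ (Fin d)))
    (hγp : ∀ i, γp.map (fun x => x i) = μ i)
    (hopt : ∀ γ' : Measure (Fin N → EuclideanSpace ℝ (Fin d)),
      (∀ i, γ'.map (fun x => x i) = μ i) →
      (∫⁻ x, ENNReal.ofReal (∑ i, l i * ‖x i - bar x‖ ^ p) ∂γp)
        ≤ ∫⁻ x, ENNReal.ofReal (∑ i, l i * ‖x i - bar x‖ ^ p) ∂γ') :
    (∀ ν : Measure (EuclideanSpace ℝ (Fin d)), IsProbabilityMeasure ν →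
      ∑ i, ENNReal.ofReal (l i) * wassersteinPPow d p (μ i) (γp.map bar)
        ≤ ∑ i, ENNReal.ofReal (l i) * wassersteinPPow d p (μ i) ν) ∧
    (∀ i, (γp.map (fun x => (x i, bar x))).map Prod.fst = μ i ∧
      (γp.map (fun x => (x i, bar x))).map Prod.snd = γp.map bar ∧
      (∫⁻ q, ENNReal.ofReal (‖q.1 - q.2‖ ^ p) ∂(γp.map (fun x => (x i, bar x))))
        = wassersteinPPow d p (μ i) (γp.map bar)) := by
  have hp0 : (0:ℝ) ≤ p := by linarith
  have hrpow : Measurable (fun t : ℝ => t ^ p) := (Real.continuous_rpow_const hp0).measurable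
  have hmeas1 : ∀ {α : Type} [MeasurableSpace α] (f : α → EuclideanSpace ℝ (Fin d)),
      Measurable f → ∀ (g : α → EuclideanSpace ℝ (Fin d)), Measurable g →
      Measurable fun x => ENNReal.ofReal (‖f x - g x‖ ^ p) := by
    intro α _ f hf g hg
    exact (hrpow.comp (hf.sub hg).norm).ennreal_ofReal
  -- measurability of the multi-marginal cost
  have hcm : Measurable (fun x : Fin N → EuclideanSpace ℝ (Fin d) => ENNReal.ofReal (∑ i, l i * ‖x i - bar x‖ ^ p)) := by
    refine Measurable.ennreal_ofReal ?_
    refine Finset.measurable_sum _ fun i _ => measurable_const.mul ?_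
    exact ((hrpow.comp ((measurable_pi_apply i).sub hbarm).norm))
  have hqm : Measurable (fun q : EuclideanSpace ℝ (Fin d) × EuclideanSpace ℝ (Fin d) => ENNReal.ofReal (‖q.1 - q.2‖ ^ p)) :=
    (hrpow.comp (measurable_fst.sub measurable_snd).norm).ennreal_ofReal
  -- the expansion of the cost as a weighted sum
  have expand : ∀ (γ : Measure (Fin N → EuclideanSpace ℝ (Fin d))) (w : (Fin N → EuclideanSpace ℝ (Fin d)) → EuclideanSpace ℝ (Fin d)), Measurable w →
      ∫⁻ x, ENNReal.ofReal (∑ i, l i * ‖x i - w x‖ ^ p) ∂γ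
        = ∑ i, ENNReal.ofReal (l i) * ∫⁻ x, ENNReal.ofReal (‖x i - w x‖ ^ p) ∂γ := by
    intro γ w hw
    have h1 : ∀ x, ENNReal.ofReal (∑ i, l i * ‖x i - w x‖ ^ p)
        = ∑ i, ENNReal.ofReal (l i) * ENNReal.ofReal (‖x i - w x‖ ^ p) := by
      intro x
      rw [ENNReal.ofReal_sum_of_nonneg
        (fun i _ => mul_nonneg (hl i).le (Real.rpow_nonneg (norm_nonneg _) _))]
      exact Finset.sum_congr rfl fun i _ => ENNReal.ofReal_mul (hl i).le
    simp_rw [h1]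
    rw [lintegral_finset_sum _ (fun i _ =>
      (hmeas1 _ (measurable_pi_apply i) _ hw).const_mul _)]
    exact Finset.sum_congr rfl fun i _ => lintegral_const_mul _
      (hmeas1 _ (measurable_pi_apply i) _ hw)
  -- the candidate optimal plans
  set Γ : Fin N → Measure (EuclideanSpace ℝ (Fin d) × EuclideanSpace ℝ (Fin d)) := fun i => γp.map (fun x => (x i, bar x)) with hΓdef
  have hΓm : ∀ i, Measurable fun x : Fin N → EuclideanSpace ℝ (Fin d) => (x i, bar x) :=
    fun i => (measurable_pi_apply i).prodMk hbarm
  have marg1 : ∀ i, (Γ i).map Prod.fst = μ i := by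
    intro i
    rw [hΓdef, Measure.map_map measurable_fst (hΓm i)]
    exact hγp i
  have marg2 : ∀ i, (Γ i).map Prod.snd = γp.map bar := by
    intro i
    rw [hΓdef, Measure.map_map measurable_snd (hΓm i)]
    rfl
  have costΓ : ∀ i, ∫⁻ q, ENNReal.ofReal (‖q.1 - q.2‖ ^ p) ∂(Γ i)
      = ∫⁻ x, ENNReal.ofReal (‖x i - bar x‖ ^ p) ∂γp := by
    intro i
    rw [hΓdef, lintegral_map hqm (hΓm i)]
  -- γp is a probability measure
  haveI hγprob : IsProbabilityMeasure γp := by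
    constructor
    have i0 : Fin N := ⟨0, hN⟩
    haveI := hprob i0
    calc γp Set.univ = γp ((fun x => x i0) ⁻¹' Set.univ) := by rw [Set.preimage_univ]
      _ = (γp.map (fun x => x i0)) Set.univ :=
        (Measure.map_apply (measurable_pi_apply i0) MeasurableSet.univ).symm
      _ = 1 := by rw [hγp i0]; exact measure_univ
  -- the comparison with the cost at given coupling against γp's optimality at ν
  have wle : ∀ (i : Fin N) (ν : Measure (EuclideanSpace ℝ (Fin d))) (η : Measure (EuclideanSpace ℝ (Fin d) × EuclideanSpace ℝ (Fin d))), η.map Prod.fst = μ i →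
      η.map Prod.snd = ν →
      wassersteinPPow d p (μ i) ν ≤ ∫⁻ q, ENNReal.ofReal (‖q.1 - q.2‖ ^ p) ∂η := by
    intro i ν η h1 h2
    exact iInf_le
      (fun η : {η : Measure (EuclideanSpace ℝ (Fin d) × EuclideanSpace ℝ (Fin d)) // η.map Prod.fst = μ i ∧ η.map Prod.snd = ν} =>
        ∫⁻ q, ENNReal.ofReal (‖q.1 - q.2‖ ^ p) ∂(η.1)) ⟨η, h1, h2⟩
  -- the master gluing inequality
  have master : ∀ (ν : Measure (EuclideanSpace ℝ (Fin d))), IsProbabilityMeasure ν →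
      ∀ η : Fin N → Measure (EuclideanSpace ℝ (Fin d) × EuclideanSpace ℝ (Fin d)), (∀ i, (η i).map Prod.fst = μ i) →
      (∀ i, (η i).map Prod.snd = ν) →
      ∫⁻ x, ENNReal.ofReal (∑ i, l i * ‖x i - bar x‖ ^ p) ∂γp
        ≤ ∑ i, ENNReal.ofReal (l i) * ∫⁻ q, ENNReal.ofReal (‖q.1 - q.2‖ ^ p) ∂(η i) := by
    intro ν hν η hη1 hη2
    haveI hηp : ∀ i, IsProbabilityMeasure (η i) := by
      intro i
      constructor
      haveI := hν
      calc (η i) Set.univ = ((η i).map Prod.snd) Set.univ := by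
            rw [Measure.map_apply measurable_snd MeasurableSet.univ, Set.preimage_univ]
        _ = 1 := by rw [hη2 i]; exact measure_univ
    set ρ : Fin N → Measure (EuclideanSpace ℝ (Fin d) × EuclideanSpace ℝ (Fin d)) := fun i => (η i).map Prod.swap with hρdef
    haveI : ∀ i, IsProbabilityMeasure (ρ i) :=
      fun i => Measure.isProbabilityMeasure_map measurable_swap.aemeasurable
    have hρfst : ∀ i, (ρ i).fst = ν := by
      intro i
      rw [hρdef, Measure.fst, Measure.map_map measurable_fst measurable_swap]
      exact hη2 i
    have hρsnd : ∀ i, (ρ i).snd = μ i := by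
      intro i
      rw [hρdef, Measure.snd, Measure.map_map measurable_snd measurable_swap]
      exact hη1 i
    set κ : Fin N → ProbabilityTheory.Kernel (EuclideanSpace ℝ (Fin d)) (EuclideanSpace ℝ (Fin d)) := fun i => (ρ i).condKernel with hκdef
    have hdis : ∀ i, Measure.compProd ν (κ i) = ρ i := by
      intro i
      have h := (ρ i).disintegrate (ρ i).condKernel
      rwa [hρfst i] at h
    set K : EuclideanSpace ℝ (Fin d) → Measure (Fin N → EuclideanSpace ℝ (Fin d)) := fun z => Measure.pi (fun i => κ i z) with hKdef
    have hKm : Measurable K :=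
      aux_measurable_measurePi _ (fun i => (κ i).measurable) (fun i z => inferInstance)
    have hKmarg : ∀ (i : Fin N) (z : EuclideanSpace ℝ (Fin d)), (K z).map (fun x => x i) = κ i z :=
      fun i z => aux_pi_map_eval _ i
    set γ' : Measure (Fin N → EuclideanSpace ℝ (Fin d)) := ν.bind K with hγ'def
    have hγ'marg : ∀ i, γ'.map (fun x => x i) = μ i := by
      intro i
      ext s hs
      rw [Measure.map_apply (measurable_pi_apply i) hs,
        Measure.bind_apply ((measurable_pi_apply i) hs) hKm.aemeasurable]
      have h1 : ∀ z, K z ((fun x => x i) ⁻¹' s) = κ i z s := by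
        intro z
        rw [← Measure.map_apply (measurable_pi_apply i) hs, hKmarg i z]
      simp_rw [h1]
      have h2 : μ i s = ∫⁻ z, κ i z s ∂ν := by
        rw [← hρsnd i, ← hdis i, Measure.snd, Measure.map_apply measurable_snd hs,
          Measure.compProd_apply (measurable_snd hs)]
        rfl
      rw [h2]
    calc ∫⁻ x, ENNReal.ofReal (∑ i, l i * ‖x i - bar x‖ ^ p) ∂γp
        ≤ ∫⁻ x, ENNReal.ofReal (∑ i, l i * ‖x i - bar x‖ ^ p) ∂γ' := hopt γ' hγ'marg
      _ = ∫⁻ z, ∫⁻ x, ENNReal.ofReal (∑ i, l i * ‖x i - bar x‖ ^ p) ∂(K z) ∂ν :=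
        Measure.lintegral_bind hKm.aemeasurable hcm.aemeasurable
      _ ≤ ∫⁻ z, ∫⁻ x, ENNReal.ofReal (∑ i, l i * ‖x i - z‖ ^ p) ∂(K z) ∂ν :=
        lintegral_mono fun z => lintegral_mono fun x => ENNReal.ofReal_le_ofReal (hbar x z)
      _ = ∫⁻ z, ∑ i, ENNReal.ofReal (l i)
            * ∫⁻ y, ENNReal.ofReal (‖y - z‖ ^ p) ∂(κ i z) ∂ν := by
        refine lintegral_congr fun z => ?_
        rw [expand (K z) (fun _ => z) measurable_const]
        refine Finset.sum_congr rfl fun i _ => ?_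
        congr 1
        have h1 : Measurable fun y : EuclideanSpace ℝ (Fin d) =>
            ENNReal.ofReal (‖y - z‖ ^ p) := hmeas1 _ measurable_id _ measurable_const
        rw [← hKmarg i z]
        exact (lintegral_map h1 (measurable_pi_apply i)).symm
      _ = ∑ i, ENNReal.ofReal (l i)
            * ∫⁻ z, ∫⁻ y, ENNReal.ofReal (‖y - z‖ ^ p) ∂(κ i z) ∂ν := by
        have hint : ∀ i : Fin N, Measurable fun z =>
            ∫⁻ y, ENNReal.ofReal (‖y - z‖ ^ p) ∂(κ i z) := by
          intro i
          exact Measurable.lintegral_kernel_prod_right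
            (hmeas1 _ measurable_snd _ measurable_fst)
        rw [lintegral_finset_sum _ (fun i _ => (hint i).const_mul _)]
        exact Finset.sum_congr rfl fun i _ => lintegral_const_mul _ (hint i)
      _ = ∑ i, ENNReal.ofReal (l i) * ∫⁻ q, ENNReal.ofReal (‖q.1 - q.2‖ ^ p) ∂(η i) := by
        refine Finset.sum_congr rfl fun i _ => ?_
        congr 1
        have h5 : Measurable fun r : EuclideanSpace ℝ (Fin d) × EuclideanSpace ℝ (Fin d) =>
            ENNReal.ofReal (‖r.2 - r.1‖ ^ p) := hmeas1 _ measurable_snd _ measurable_fst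
        have e1 : ∫⁻ z, ∫⁻ y, ENNReal.ofReal (‖y - z‖ ^ p) ∂(κ i z) ∂ν
            = ∫⁻ r : EuclideanSpace ℝ (Fin d) × EuclideanSpace ℝ (Fin d),
              ENNReal.ofReal (‖r.2 - r.1‖ ^ p) ∂(Measure.compProd ν (κ i)) :=
          (Measure.lintegral_compProd h5).symm
        have e2 : (∫⁻ r : EuclideanSpace ℝ (Fin d) × EuclideanSpace ℝ (Fin d),
              ENNReal.ofReal (‖r.2 - r.1‖ ^ p) ∂(Measure.compProd ν (κ i)))
            = ∫⁻ r : EuclideanSpace ℝ (Fin d) × EuclideanSpace ℝ (Fin d),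
              ENNReal.ofReal (‖r.2 - r.1‖ ^ p) ∂((η i).map Prod.swap) := by
          rw [hdis i, hρdef]
        have e3 : (∫⁻ r : EuclideanSpace ℝ (Fin d) × EuclideanSpace ℝ (Fin d),
              ENNReal.ofReal (‖r.2 - r.1‖ ^ p) ∂((η i).map Prod.swap))
            = ∫⁻ q, ENNReal.ofReal (‖q.1 - q.2‖ ^ p) ∂(η i) :=
          lintegral_map h5 measurable_swap
        exact e1.trans (e2.trans e3)
  -- finiteness of the optimal cost
  have hfin : ∫⁻ x, ENNReal.ofReal (∑ i, l i * ‖x i - bar x‖ ^ p) ∂γp < ⊤ := by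
    calc ∫⁻ x, ENNReal.ofReal (∑ i, l i * ‖x i - bar x‖ ^ p) ∂γp
        ≤ ∫⁻ x, ENNReal.ofReal (∑ i, l i * ‖x i - (0:EuclideanSpace ℝ (Fin d))‖ ^ p) ∂γp :=
        lintegral_mono fun x => ENNReal.ofReal_le_ofReal (hbar x 0)
      _ = ∑ i, ENNReal.ofReal (l i) * ∫⁻ x, ENNReal.ofReal (‖x i - (0:EuclideanSpace ℝ (Fin d))‖ ^ p) ∂γp :=
        expand γp (fun _ => 0) measurable_const
      _ < ⊤ := by
        rw [ENNReal.sum_lt_top]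
        intro i _
        refine ENNReal.mul_lt_top ENNReal.ofReal_lt_top ?_
        have h1 : ∫⁻ x, ENNReal.ofReal (‖x i - (0:EuclideanSpace ℝ (Fin d))‖ ^ p) ∂γp
            = ∫⁻ y, ENNReal.ofReal (‖y‖ ^ p) ∂(μ i) := by
          have h1 : Measurable fun y : EuclideanSpace ℝ (Fin d) =>
              ENNReal.ofReal (‖y‖ ^ p) := by
            have := hmeas1 (fun y : EuclideanSpace ℝ (Fin d) => y) measurable_id
              (fun _ => 0) measurable_const
            simpa [sub_zero] using this
          rw [← hγp i, lintegral_map h1 (measurable_pi_apply i)]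
          simp_rw [sub_zero]
        rw [h1]
        exact hmom i
  -- the master inequality against the infimum
  have masterW : ∀ (ν : Measure (EuclideanSpace ℝ (Fin d))), IsProbabilityMeasure ν →
      ∫⁻ x, ENNReal.ofReal (∑ i, l i * ‖x i - bar x‖ ^ p) ∂γp
        ≤ ∑ i, ENNReal.ofReal (l i) * wassersteinPPow d p (μ i) ν := by
    intro ν hν
    by_cases htop : ∃ i, wassersteinPPow d p (μ i) ν = ⊤
    · obtain ⟨i, hi⟩ := htop
      have h1 : ∑ i, ENNReal.ofReal (l i) * wassersteinPPow d p (μ i) ν = ⊤ :=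
        ENNReal.sum_eq_top.mpr ⟨i, Finset.mem_univ i, by
          rw [hi, ENNReal.mul_top ((ENNReal.ofReal_pos.mpr (hl i)).ne')]⟩
      rw [h1]
      exact le_top
    · push_neg at htop
      refine ENNReal.le_of_forall_pos_le_add fun ε hε _ => ?_
      have hchoice : ∀ i, ∃ η : {η : Measure (EuclideanSpace ℝ (Fin d) × EuclideanSpace ℝ (Fin d)) //
          η.map Prod.fst = μ i ∧ η.map Prod.snd = ν},
          (∫⁻ q, ENNReal.ofReal (‖q.1 - q.2‖ ^ p) ∂(η.1))
            < wassersteinPPow d p (μ i) ν + ε := by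
        intro i
        have hlt : wassersteinPPow d p (μ i) ν < wassersteinPPow d p (μ i) ν + ε :=
          ENNReal.lt_add_right (htop i) (ENNReal.coe_ne_zero.mpr hε.ne')
        unfold wassersteinPPow at hlt
        exact iInf_lt_iff.mp hlt
      choose η hη using hchoice
      calc ∫⁻ x, ENNReal.ofReal (∑ i, l i * ‖x i - bar x‖ ^ p) ∂γp
          ≤ ∑ i, ENNReal.ofReal (l i) * ∫⁻ q, ENNReal.ofReal (‖q.1 - q.2‖ ^ p) ∂((η i).1) :=
          master ν hν (fun i => (η i).1) (fun i => (η i).2.1) (fun i => (η i).2.2)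
        _ ≤ ∑ i, ENNReal.ofReal (l i) * (wassersteinPPow d p (μ i) ν + ε) :=
          Finset.sum_le_sum fun i _ => mul_le_mul_right (hη i).le _
        _ = ∑ i, ENNReal.ofReal (l i) * wassersteinPPow d p (μ i) ν
              + ∑ i, ENNReal.ofReal (l i) * (ε : ℝ≥0∞) := by
          rw [← Finset.sum_add_distrib]
          exact Finset.sum_congr rfl fun i _ => mul_add _ _ _
        _ = ∑ i, ENNReal.ofReal (l i) * wassersteinPPow d p (μ i) ν + ε := by
          congr 1
          rw [← Finset.sum_mul, ← ENNReal.ofReal_sum_of_nonneg (fun i _ => (hl i).le), hsum,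
            ENNReal.ofReal_one, one_mul]
  -- the cost of γp equals the weighted sum over the plans Γ i
  have hbeq : ∑ j, ENNReal.ofReal (l j) * (∫⁻ q, ENNReal.ofReal (‖q.1 - q.2‖ ^ p) ∂(Γ j))
      = ∫⁻ x, ENNReal.ofReal (∑ i, l i * ‖x i - bar x‖ ^ p) ∂γp := by
    rw [expand γp bar hbarm]
    exact Finset.sum_congr rfl fun j _ => by rw [costΓ j]
  haveI hνp : IsProbabilityMeasure (γp.map bar) := Measure.isProbabilityMeasure_map hbarm.aemeasurable
  constructor
  · intro ν hν
    calc ∑ i, ENNReal.ofReal (l i) * wassersteinPPow d p (μ i) (γp.map bar)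
        ≤ ∑ i, ENNReal.ofReal (l i) * ∫⁻ q, ENNReal.ofReal (‖q.1 - q.2‖ ^ p) ∂(Γ i) :=
        Finset.sum_le_sum fun i _ =>
          mul_le_mul_right (wle i (γp.map bar) (Γ i) (marg1 i) (marg2 i)) _
      _ = ∫⁻ x, ENNReal.ofReal (∑ i, l i * ‖x i - bar x‖ ^ p) ∂γp := hbeq
      _ ≤ ∑ i, ENNReal.ofReal (l i) * wassersteinPPow d p (μ i) ν := masterW ν hν
  · intro i
    refine ⟨marg1 i, marg2 i, ?_⟩
    set a : Fin N → ℝ≥0∞ := fun j => ENNReal.ofReal (l j) * wassersteinPPow d p (μ j) (γp.map bar)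
      with hadef
    set b : Fin N → ℝ≥0∞ := fun j =>
      ENNReal.ofReal (l j) * ∫⁻ q, ENNReal.ofReal (‖q.1 - q.2‖ ^ p) ∂(Γ j) with hbdef
    have hterm : ∀ j, a j ≤ b j :=
      fun j => mul_le_mul_right (wle j (γp.map bar) (Γ j) (marg1 j) (marg2 j)) _
    have hsum_le : ∑ j, b j ≤ ∑ j, a j := by
      rw [hbeq]
      exact masterW (γp.map bar) hνp
    have hbtop : ∀ j, b j ≠ ⊤ := by
      intro j
      have h1 : ∑ j', b j' < ⊤ := by rw [hbeq]; exact hfin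
      exact ((ENNReal.sum_lt_top.mp h1) j (Finset.mem_univ j)).ne
    by_contra hne
    have hWlt : wassersteinPPow d p (μ i) (γp.map bar)
        < ∫⁻ q, ENNReal.ofReal (‖q.1 - q.2‖ ^ p) ∂(Γ i) :=
      lt_of_le_of_ne (wle i (γp.map bar) (Γ i) (marg1 i) (marg2 i)) (Ne.symm hne)
    have hstrict : a i < b i := by
      rw [hadef, hbdef]
      exact (ENNReal.mul_lt_mul_iff_right ((ENNReal.ofReal_pos.mpr (hl i)).ne')
        ENNReal.ofReal_ne_top).mpr hWlt
    have h4 : ∑ j, a j < ∑ j, b j := by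
      rw [← Finset.add_sum_erase _ a (Finset.mem_univ i),
        ← Finset.add_sum_erase _ b (Finset.mem_univ i)]
      have hrest : ∑ j ∈ Finset.univ.erase i, b j ≠ ⊤ :=
        (ENNReal.sum_lt_top.mpr fun j _ => lt_top_iff_ne_top.mpr (hbtop j)).ne
      calc a i + ∑ j ∈ Finset.univ.erase i, a j
          ≤ a i + ∑ j ∈ Finset.univ.erase i, b j :=
          add_le_add_right (Finset.sum_le_sum fun j _ => hterm j) _
        _ < b i + ∑ j ∈ Finset.univ.erase i, b j := ENNReal.add_lt_add_right hrest hstrict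
    exact absurd (h4.trans_le hsum_le) (lt_irrefl _)
end

section
/- Let p ≥ 2 and let S ⊊ {1,…,N}. If x = (x₁,…,x_N) satisfies x̄_p(x) = xᵢ for every i ∈ S and x̄_p(x) ≠ x_j for every j ∉ S, then x̄_p(x) equals the reduced barycenter argmin_{z∈ℝ^d} Σ_{j∉S} λⱼ |x_j - z|^p; in particular xᵢ is this reduced minimizer for each i ∈ S. -/
open Finset

/-- for `p ≥ 2` and a proper subset `S ⊊ {1,…,N}`, if
`x̄_p(x) = xᵢ` for every `i ∈ S` and `x̄_p(x) ≠ x_j` for `j ∉ S`, then `x̄_p(x)`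
minimizes the reduced functional `z ↦ ∑_{j ∉ S} λⱼ ‖x_j - z‖^p`; in particular
each `xᵢ`, `i ∈ S`, is the reduced minimizer. -/
theorem reduced_barycenter
    (d N : ℕ) (hd : 1 ≤ d) (hN : 1 ≤ N) (p : ℝ) (hp : 2 ≤ p)
    (l : Fin N → ℝ) (hl : ∀ i, 0 < l i) (hsum : ∑ i, l i = 1)
    (x : Fin N → EuclideanSpace ℝ (Fin d)) (z : EuclideanSpace ℝ (Fin d))
    (hz : ∀ w : EuclideanSpace ℝ (Fin d),
      ∑ i, l i * ‖x i - z‖ ^ p ≤ ∑ i, l i * ‖x i - w‖ ^ p)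
    (S : Finset (Fin N)) (hS : S ≠ Finset.univ)
    (hSeq : ∀ i ∈ S, z = x i) (hSne : ∀ j ∉ S, z ≠ x j) :
    (∀ w : EuclideanSpace ℝ (Fin d),
      ∑ j ∈ Sᶜ, l j * ‖x j - z‖ ^ p ≤ ∑ j ∈ Sᶜ, l j * ‖x j - w‖ ^ p) ∧
    ∀ i ∈ S, ∀ w : EuclideanSpace ℝ (Fin d),
      ∑ j ∈ Sᶜ, l j * ‖x j - x i‖ ^ p ≤ ∑ j ∈ Sᶜ, l j * ‖x j - w‖ ^ p := by
  have hp1 : (1 : ℝ) ≤ p := by linarith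
  have hp0 : p ≠ 0 := by positivity
  have main : ∀ w : EuclideanSpace ℝ (Fin d),
      ∑ j ∈ Sᶜ, l j * ‖x j - z‖ ^ p ≤ ∑ j ∈ Sᶜ, l j * ‖x j - w‖ ^ p := by
    intro w
    set B : EuclideanSpace ℝ (Fin d) → ℝ :=
      fun v => ∑ j ∈ Sᶜ, l j * ‖x j - v‖ ^ p with hB
    set K : ℝ := (∑ i ∈ S, l i) * ‖z - w‖ ^ p with hK
    have hK0 : 0 ≤ K := by
      apply mul_nonneg (Finset.sum_nonneg fun i _ => (hl i).le)
      positivity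
    have key : ∀ t : ℝ, 0 < t → t ≤ 1 → B z ≤ t * K + B w := by
      intro t ht ht1
      set u : EuclideanSpace ℝ (Fin d) := (1 - t) • z + t • w with hu
      -- full sum at z equals B z
      have hSzero : ∀ i ∈ S, l i * ‖x i - z‖ ^ p = 0 := by
        intro i hi
        rw [← hSeq i hi]
        simp [Real.zero_rpow hp0]
      have hfullz : ∑ i, l i * ‖x i - z‖ ^ p = B z := by
        rw [← Finset.sum_add_sum_compl S, Finset.sum_eq_zero hSzero, zero_add]
      -- convexity bound on Sᶜ
      have hconv : ∀ j, ‖x j - u‖ ^ p ≤ (1 - t) * ‖x j - z‖ ^ p + t * ‖x j - w‖ ^ p := by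
        intro j
        have hdecomp : x j - u = (1 - t) • (x j - z) + t • (x j - w) := by
          rw [hu]; module
        have h1 : ‖x j - u‖ ≤ (1 - t) * ‖x j - z‖ + t * ‖x j - w‖ := by
          rw [hdecomp]
          refine (norm_add_le _ _).trans ?_
          rw [norm_smul, norm_smul, Real.norm_eq_abs, Real.norm_eq_abs,
            abs_of_nonneg (by linarith), abs_of_nonneg ht.le]
        have h2 : ‖x j - u‖ ^ p ≤ ((1 - t) * ‖x j - z‖ + t * ‖x j - w‖) ^ p :=
          Real.rpow_le_rpow (norm_nonneg _) h1 (by linarith)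
        refine h2.trans ?_
        have := (convexOn_rpow hp1).2 (Set.mem_Ici.2 (norm_nonneg (x j - z)))
          (Set.mem_Ici.2 (norm_nonneg (x j - w))) (by linarith : (0:ℝ) ≤ 1 - t) ht.le
          (by ring : (1 - t) + t = 1)
        simpa using this
      -- terms on S at u
      have hSterm : ∀ i ∈ S, l i * ‖x i - u‖ ^ p = l i * (t ^ p * ‖z - w‖ ^ p) := by
        intro i hi
        rw [← hSeq i hi]
        have : z - u = t • (z - w) := by rw [hu]; module
        rw [this, norm_smul, Real.norm_eq_abs, abs_of_nonneg ht.le,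
          Real.mul_rpow ht.le (norm_nonneg _)]
      have step : B z ≤ t ^ p * K + ((1 - t) * B z + t * B w) := by
        calc B z = ∑ i, l i * ‖x i - z‖ ^ p := hfullz.symm
          _ ≤ ∑ i, l i * ‖x i - u‖ ^ p := hz u
          _ = (∑ i ∈ S, l i * ‖x i - u‖ ^ p) + ∑ j ∈ Sᶜ, l j * ‖x j - u‖ ^ p :=
              (Finset.sum_add_sum_compl S _).symm
          _ ≤ t ^ p * K + ((1 - t) * B z + t * B w) := by
              refine add_le_add ?_ ?_
              · refine le_of_eq ?_
                rw [Finset.sum_congr rfl hSterm, hK]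
                rw [show ∀ c : ℝ, (∑ i ∈ S, l i * c) = (∑ i ∈ S, l i) * c from
                  fun c => by rw [Finset.sum_mul]]
                ring
              · calc ∑ j ∈ Sᶜ, l j * ‖x j - u‖ ^ p
                    ≤ ∑ j ∈ Sᶜ, l j * ((1 - t) * ‖x j - z‖ ^ p + t * ‖x j - w‖ ^ p) :=
                      Finset.sum_le_sum fun j _ =>
                        mul_le_mul_of_nonneg_left (hconv j) (hl j).le
                  _ = (1 - t) * B z + t * B w := by
                      rw [hB, Finset.mul_sum, Finset.mul_sum, ← Finset.sum_add_distrib]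
                      exact Finset.sum_congr rfl fun j _ => by ring
      have hts : t ^ p = t * t ^ (p - 1) := by
        rw [show p = 1 + (p - 1) by ring, Real.rpow_add ht, Real.rpow_one]; ring_nf
      have htp : t ^ (p - 1) ≤ t := by
        have := Real.rpow_le_rpow_of_exponent_ge ht ht1 (by linarith : (1:ℝ) ≤ p - 1)
        simpa using this
      have h9 : t ^ p * K ≤ t * (t * K) := by
        rw [hts]
        nlinarith [mul_le_mul_of_nonneg_right (mul_le_mul_of_nonneg_left htp ht.le) hK0]
      have h4 : t * B z ≤ t * (t * K + B w) := by linarith [step, h9]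
      exact (mul_le_mul_iff_right₀ ht).mp h4
    refine le_of_forall_pos_le_add fun ε hε => ?_
    have hK1 : (0:ℝ) < K + 1 := by linarith
    set t : ℝ := min 1 (ε / (K + 1)) with htdef
    have ht : 0 < t := lt_min one_pos (div_pos hε hK1)
    have h5 := key t ht (min_le_left _ _)
    have h6 : t * K ≤ ε := by
      have h7 : t * K ≤ (ε / (K + 1)) * K :=
        mul_le_mul_of_nonneg_right (min_le_right _ _) hK0
      have h8 : (ε / (K + 1)) * K ≤ ε := by
        rw [div_mul_eq_mul_div, div_le_iff₀ hK1]; nlinarith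
      linarith
    linarith
  exact ⟨main, fun i hi w => by rw [← hSeq i hi]; exact main w⟩
end

section
/- Let γ be a coupling of μ₁,…,μ_N on ℝ^{Nd}, and let S ⊆ {1,…,N} be nonempty with i ∈ S. Let D_S := {x : x̄_p(x) = xⱼ for all j ∈ S, x̄_p(x) ≠ xⱼ for j ∉ S}. If E ⊂ ℝ^d has diameter < δ, then πⁱ(x̄_p⁻¹(E) ∩ D_S) has diameter < δ; consequently, if 𝓛^d(E) = 0 then 𝓗^d(πⁱ(x̄_p⁻¹(E) ∩ D_S)) = 0. -/
open Finset MeasureTheory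
open scoped ENNReal

/-- for a coupling `γ` of `μ₁,…,μ_N`, a nonempty `S` and `i ∈ S`,
with `D_S = {x : x̄_p(x) = xⱼ ∀ j ∈ S, x̄_p(x) ≠ xⱼ ∀ j ∉ S}`: if `E` has
diameter `< δ` then `πⁱ(x̄_p⁻¹(E) ∩ D_S)` has diameter `< δ`; consequently if
`𝓛^d(E) = 0` then `𝓗^d(πⁱ(x̄_p⁻¹(E) ∩ D_S)) = 0`. -/
theorem projection_of_singular_set
    (d N : ℕ) (hd : 1 ≤ d) (hN : 1 ≤ N) (p : ℝ) (hp : 1 < p)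
    (l : Fin N → ℝ) (hl : ∀ i, 0 < l i) (hsum : ∑ i, l i = 1)
    (bar : (Fin N → EuclideanSpace ℝ (Fin d)) → EuclideanSpace ℝ (Fin d))
    (hbar : ∀ x, ∀ w : EuclideanSpace ℝ (Fin d),
      ∑ i, l i * ‖x i - bar x‖ ^ p ≤ ∑ i, l i * ‖x i - w‖ ^ p)
    (μ : Fin N → Measure (EuclideanSpace ℝ (Fin d)))
    (hprob : ∀ i, IsProbabilityMeasure (μ i))
    (γ : Measure (Fin N → EuclideanSpace ℝ (Fin d)))
    (hγ : ∀ i, γ.map (fun x => x i) = μ i)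
    (S : Set (Fin N)) (hS : S.Nonempty) (i : Fin N) (hi : i ∈ S)
    (DS : Set (Fin N → EuclideanSpace ℝ (Fin d)))
    (hDS : DS = {x | (∀ j ∈ S, bar x = x j) ∧ ∀ j ∉ S, bar x ≠ x j})
    (E : Set (EuclideanSpace ℝ (Fin d))) :
    (∀ δ : ℝ≥0∞, 0 < δ → EMetric.diam E < δ →
      EMetric.diam ((fun x => x i) '' (bar ⁻¹' E ∩ DS)) < δ) ∧
    (volume E = 0 →
      μH[(d : ℝ)] ((fun x => x i) '' (bar ⁻¹' E ∩ DS)) = 0) := by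
  have hsub : (fun x => x i) '' (bar ⁻¹' E ∩ DS) ⊆ E := by
    rintro y ⟨x, ⟨hxE, hxD⟩, rfl⟩
    rw [hDS] at hxD
    have := hxD.1 i hi
    simpa [← this] using hxE
  constructor
  · intro δ _ hδ
    exact lt_of_le_of_lt (EMetric.diam_mono hsub) hδ
  · intro hE
    have hfr : Module.finrank ℝ (EuclideanSpace ℝ (Fin d)) = d := by simp
    have hμH : (μH[(d : ℝ)] : Measure (EuclideanSpace ℝ (Fin d)))
        = μH[(Module.finrank ℝ (EuclideanSpace ℝ (Fin d)) : ℝ)] := by rw [hfr]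
    have hHaar : Measure.IsAddHaarMeasure
        (μH[(Module.finrank ℝ (EuclideanSpace ℝ (Fin d)) : ℝ)] :
          Measure (EuclideanSpace ℝ (Fin d))) :=
      MeasureTheory.isAddHaarMeasure_hausdorffMeasure
    rw [hμH]
    have heq := Measure.isAddLeftInvariant_eq_smul
      (μH[(Module.finrank ℝ (EuclideanSpace ℝ (Fin d)) : ℝ)] :
        Measure (EuclideanSpace ℝ (Fin d))) volume
    refine le_antisymm ?_ zero_le
    calc μH[(Module.finrank ℝ (EuclideanSpace ℝ (Fin d)) : ℝ)]
          ((fun x => x i) '' (bar ⁻¹' E ∩ DS))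
        ≤ μH[(Module.finrank ℝ (EuclideanSpace ℝ (Fin d)) : ℝ)] E := measure_mono hsub
      _ = 0 := by rw [heq]; simp [hE]
end

section
/- Let μ, ν be Borel probability measures on ℝ with finite p-th moments and inverse distribution functions F⁻¹, G⁻¹. Then W_p(μ,ν)^p = ∫₀¹ |F⁻¹(y) − G⁻¹(y)|^p dy, where F⁻¹(t) = inf{y : F(y) ≥ t} and F(x) = μ((−∞,x]). -/
open MeasureTheory
open scoped ENNReal

set_option linter.unnecessarySeqFocus false
set_option linter.unusedTactic false

namespace Wass19


noncomputable def quant (μ : Measure ℝ) (t : ℝ) : ℝ :=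
  sInf {y : ℝ | ENNReal.ofReal t ≤ μ (Set.Iic y)}

noncomputable def psi (p : ℝ) (su : ℝ × ℝ) : ℝ≥0∞ :=
  if su.1 < su.2 then ENNReal.ofReal (p * (p - 1) * (su.2 - su.1) ^ (p - 2)) else 0

def D (x y : ℝ) : Set (ℝ × ℝ) := {su | y ≤ su.1 ∧ su.2 ≤ x}

lemma measurable_psi (p : ℝ) : Measurable (psi p) := by
  unfold psi
  apply Measurable.ite (measurableSet_lt measurable_fst measurable_snd)
  · exact (measurable_const.mul ((measurable_snd.sub measurable_fst).pow measurable_const)).ennreal_ofReal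
  · exact measurable_const

lemma measurableSet_D (x y : ℝ) : MeasurableSet (D x y) :=
  (measurableSet_le measurable_const measurable_fst).inter
    (measurableSet_le measurable_snd measurable_const)

lemma inner_int {p : ℝ} (hp : 1 < p) {s x : ℝ} (hsx : s < x) :
    ∫⁻ u in Set.Ioc s x, ENNReal.ofReal (p * (p - 1) * (u - s) ^ (p - 2))
      = ENNReal.ofReal (p * (x - s) ^ (p - 1)) := by
  have hpm1 : (0:ℝ) < p - 1 := by linarith
  have hInt : IntervalIntegrable (fun u => p * (p - 1) * (u - s) ^ (p - 2)) volume s x := by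
    have h0 : IntervalIntegrable (fun v : ℝ => v ^ (p - 2)) volume 0 (x - s) :=
      intervalIntegral.intervalIntegrable_rpow' (by linarith)
    have h1 := (h0.comp_sub_right s)
    simp only [zero_add, sub_add_cancel] at h1
    exact h1.const_mul _
  have hnn : 0 ≤ᵐ[volume.restrict (Set.Ioc s x)]
      fun u => p * (p - 1) * (u - s) ^ (p - 2) := by
    refine (ae_restrict_iff' measurableSet_Ioc).2 (ae_of_all _ fun u hu => ?_)
    have h1 : (0:ℝ) ≤ (u - s) ^ (p - 2) := Real.rpow_nonneg (by linarith [hu.1]) _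
    exact mul_nonneg (mul_nonneg (by linarith) (by linarith)) h1
  rw [← ofReal_integral_eq_lintegral_ofReal hInt.1 hnn]
  congr 1
  rw [← intervalIntegral.integral_of_le hsx.le]
  rw [intervalIntegral.integral_const_mul]
  have := intervalIntegral.integral_comp_sub_right (a := s) (b := x)
    (fun v : ℝ => v ^ (p - 2)) s
  rw [this, sub_self]
  rw [integral_rpow (Or.inl (by linarith))]
  rw [Real.zero_rpow (by linarith)]
  have : p - 2 + 1 = p - 1 := by ring
  rw [this]
  field_simp
  ring

lemma outer_int {p : ℝ} (hp : 1 < p) {y x : ℝ} (hyx : y < x) :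
    ∫⁻ s in Set.Ico y x, ENNReal.ofReal (p * (x - s) ^ (p - 1))
      = ENNReal.ofReal ((x - y) ^ p) := by
  have hpm1 : (0:ℝ) < p - 1 := by linarith
  rw [Measure.restrict_congr_set Ico_ae_eq_Ioc]
  have hInt : IntervalIntegrable (fun s => p * (x - s) ^ (p - 1)) volume y x := by
    have h0 : Continuous (fun v : ℝ => v ^ (p - 1)) := Real.continuous_rpow_const hpm1.le
    exact (continuous_const.mul (h0.comp (continuous_const.sub continuous_id))).intervalIntegrable y x
  have hnn : 0 ≤ᵐ[volume.restrict (Set.Ioc y x)]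
      fun s => p * (x - s) ^ (p - 1) := by
    refine (ae_restrict_iff' measurableSet_Ioc).2 (ae_of_all _ fun s hs => ?_)
    have h1 : (0:ℝ) ≤ (x - s) ^ (p - 1) := Real.rpow_nonneg (by linarith [hs.2]) _
    exact mul_nonneg (by linarith) h1
  rw [← ofReal_integral_eq_lintegral_ofReal hInt.1 hnn]
  congr 1
  rw [← intervalIntegral.integral_of_le hyx.le]
  rw [intervalIntegral.integral_const_mul]
  have := intervalIntegral.integral_comp_sub_left (a := y) (b := x)
    (fun v : ℝ => v ^ (p - 1)) x
  rw [this, sub_self]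
  rw [integral_rpow (Or.inl (by linarith)), Real.zero_rpow (by linarith)]
  have : p - 1 + 1 = p := by ring
  rw [this]
  field_simp
  simp

lemma auxB {p : ℝ} {x y : ℝ} (hxy : x ≤ y) :
    ∫⁻ su : ℝ × ℝ, psi p su * (D x y).indicator 1 su = 0 := by
  have h : ∀ su : ℝ × ℝ, psi p su * (D x y).indicator 1 su = 0 := by
    rintro ⟨s, u⟩
    by_cases h1 : s < u
    · by_cases h2 : (s, u) ∈ D x y
      · obtain ⟨hy, hx⟩ := h2
        exact absurd (lt_of_lt_of_le (lt_of_lt_of_le h1 hx) (le_trans hxy hy)) (lt_irrefl s)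
      · rw [Set.indicator_of_notMem h2, mul_zero]
    · simp [psi, h1]
  rw [lintegral_congr h, lintegral_zero]

lemma auxA {p : ℝ} (hp : 1 < p) {x y : ℝ} (hyx : y ≤ x) :
    ∫⁻ su : ℝ × ℝ, psi p su * (D x y).indicator 1 su = ENNReal.ofReal ((x - y) ^ p) := by
  have hmeas : Measurable (fun su : ℝ × ℝ => psi p su * (D x y).indicator 1 su) :=
    (measurable_psi p).mul (measurable_const.indicator (measurableSet_D x y))
  rw [MeasureTheory.Measure.volume_eq_prod, lintegral_prod _ hmeas.aemeasurable]
  have inner : ∀ s : ℝ, (∫⁻ u, psi p (s, u) * (D x y).indicator 1 (s, u))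
      = (Set.Ico y x).indicator (fun s => ENNReal.ofReal (p * (x - s) ^ (p - 1))) s := by
    intro s
    by_cases hys : y ≤ s
    · by_cases hsx : s < x
      · have hpt : ∀ u, psi p (s, u) * (D x y).indicator 1 (s, u)
            = (Set.Ioc s x).indicator
                (fun u => ENNReal.ofReal (p * (p - 1) * (u - s) ^ (p - 2))) u := by
          intro u
          simp only [psi, Set.indicator_apply, D, Set.mem_setOf_eq, Set.mem_Ioc]
          split_ifs <;> simp_all
        rw [lintegral_congr hpt, lintegral_indicator measurableSet_Ioc, inner_int hp hsx,
          Set.indicator_of_mem (Set.mem_Ico.2 ⟨hys, hsx⟩)]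
      · have hpt : ∀ u, psi p (s, u) * (D x y).indicator 1 (s, u) = 0 := by
          intro u
          by_cases h1 : s < u
          · have : (s, u) ∉ D x y := by
              rintro ⟨-, hx⟩
              exact absurd (lt_of_lt_of_le h1 (le_trans hx (not_lt.1 hsx))) (lt_irrefl s)
            rw [Set.indicator_of_notMem this, mul_zero]
          · simp [psi, h1]
        rw [lintegral_congr hpt, lintegral_zero,
          Set.indicator_of_notMem (fun hs => hsx (Set.mem_Ico.1 hs).2)]
    · have hpt : ∀ u, psi p (s, u) * (D x y).indicator 1 (s, u) = 0 := by
        intro u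
        have : (s, u) ∉ D x y := fun h => hys h.1
        rw [Set.indicator_of_notMem this, mul_zero]
      rw [lintegral_congr hpt, lintegral_zero,
        Set.indicator_of_notMem (fun hs => hys (Set.mem_Ico.1 hs).1)]
  rw [lintegral_congr inner, lintegral_indicator measurableSet_Ico]
  rcases eq_or_lt_of_le hyx with rfl | h
  · simp [Real.zero_rpow (by linarith : p ≠ 0)]
  · exact outer_int hp h

lemma rep {p : ℝ} (hp : 1 < p) (q : ℝ × ℝ) :
    ENNReal.ofReal (|q.1 - q.2| ^ p)
      = ∫⁻ su : ℝ × ℝ, psi p su *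
          ((D q.1 q.2).indicator 1 su + (D q.2 q.1).indicator 1 su) := by
  have hm1 : Measurable (fun su : ℝ × ℝ => psi p su * (D q.1 q.2).indicator 1 su) :=
    (measurable_psi p).mul (measurable_const.indicator (measurableSet_D _ _))
  simp only [mul_add]
  rw [lintegral_add_left hm1]
  rcases le_total q.2 q.1 with h | h
  · rw [auxA hp h, auxB h, add_zero, abs_of_nonneg (sub_nonneg.2 h)]
  · rw [auxA hp h, auxB h, zero_add, abs_sub_comm, abs_of_nonneg (sub_nonneg.2 h)]
lemma quant_bddBelow (μ : Measure ℝ) [IsProbabilityMeasure μ] {t : ℝ} (ht0 : 0 < t) :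
    BddBelow {y : ℝ | ENNReal.ofReal t ≤ μ (Set.Iic y)} := by
  have hinter : ⋂ n : ℕ, Set.Iic (-(n:ℝ)) = (∅ : Set ℝ) := by
    ext z
    simp only [Set.mem_iInter, Set.mem_Iic, Set.mem_empty_iff_false, iff_false, not_forall]
    obtain ⟨n, hn⟩ := exists_nat_gt (-z)
    exact ⟨n, by push_neg; linarith⟩
  have hinf : (⨅ n : ℕ, μ (Set.Iic (-(n:ℝ)))) = 0 := by
    rw [← Directed.measure_iInter (fun n => measurableSet_Iic.nullMeasurableSet)
      (fun m n => ⟨m + n, Set.Iic_subset_Iic.2 (by push_cast; linarith),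
        Set.Iic_subset_Iic.2 (by push_cast; linarith)⟩)
      ⟨0, measure_ne_top μ _⟩, hinter, measure_empty]
  have hlt : ∃ n : ℕ, μ (Set.Iic (-(n:ℝ))) < ENNReal.ofReal t := by
    by_contra hc
    push_neg at hc
    have h0 : ENNReal.ofReal t ≤ 0 := hinf ▸ le_iInf hc
    exact absurd (lt_of_lt_of_le (ENNReal.ofReal_pos.2 ht0) h0) (lt_irrefl 0)
  obtain ⟨n, hn⟩ := hlt
  refine ⟨-(n:ℝ), fun w hw => ?_⟩
  by_contra hc
  push_neg at hc
  exact absurd (lt_of_le_of_lt (le_trans hw (measure_mono (Set.Iic_subset_Iic.2 hc.le))) hn)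
    (lt_irrefl _)

lemma quant_nonempty (μ : Measure ℝ) [IsProbabilityMeasure μ] {t : ℝ} (ht1 : t < 1) :
    {y : ℝ | ENNReal.ofReal t ≤ μ (Set.Iic y)}.Nonempty := by
  have h1 : Filter.Tendsto (fun x : ℝ => μ (Set.Iic x)) Filter.atTop (nhds (μ Set.univ)) :=
    tendsto_measure_Iic_atTop μ
  rw [measure_univ] at h1
  have h2 : ENNReal.ofReal t < 1 := ENNReal.ofReal_lt_one.2 ht1
  obtain ⟨x, hx⟩ := (h1.eventually_const_lt h2).exists
  exact ⟨x, hx.le⟩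

lemma quant_le_iff (μ : Measure ℝ) [IsProbabilityMeasure μ] {t : ℝ} (ht0 : 0 < t) (ht1 : t < 1)
    (x : ℝ) : quant μ t ≤ x ↔ ENNReal.ofReal t ≤ μ (Set.Iic x) := by
  have hbdd := quant_bddBelow μ ht0
  have hne := quant_nonempty μ (t := t) ht1
  constructor
  · intro h
    have hIic : μ (Set.Iic x) = ⨅ n : ℕ, μ (Set.Iic (x + ((n:ℝ) + 1)⁻¹)) := by
      rw [← Directed.measure_iInter (fun n => measurableSet_Iic.nullMeasurableSet)
        (fun m n => ⟨m + n, Set.Iic_subset_Iic.2 (by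
            have : ((m:ℝ)+1)⁻¹ ≤ ((m:ℝ)+(n:ℝ)+1)⁻¹ → True := fun _ => trivial
            gcongr <;> push_cast <;> linarith),
          Set.Iic_subset_Iic.2 (by gcongr <;> push_cast <;> linarith)⟩)
        ⟨0, measure_ne_top μ _⟩]
      congr 1
      ext z
      simp only [Set.mem_iInter, Set.mem_Iic]
      constructor
      · intro hz n
        have h4 : (0:ℝ) < ((n:ℝ) + 1)⁻¹ := by positivity
        linarith
      · intro hz
        by_contra hc
        push_neg at hc
        obtain ⟨n, hn⟩ := exists_nat_gt (z - x)⁻¹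
        have hzx : 0 < z - x := by linarith
        have h3 : ((n:ℝ) + 1)⁻¹ < z - x := by
          rw [inv_lt_comm₀ (by positivity) hzx]
          linarith
        linarith [hz n]
    rw [hIic, le_iInf_iff]
    intro n
    have hpos : (0:ℝ) < ((n:ℝ) + 1)⁻¹ := by positivity
    have hlt : sInf {y : ℝ | ENNReal.ofReal t ≤ μ (Set.Iic y)} < x + ((n:ℝ) + 1)⁻¹ :=
      lt_of_le_of_lt h (by linarith)
    obtain ⟨w, hwS, hw⟩ := (csInf_lt_iff hbdd hne).1 hlt
    exact le_trans hwS (measure_mono (Set.Iic_subset_Iic.2 hw.le))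
  · intro h
    exact csInf_le hbdd h

lemma quant_monoOn (μ : Measure ℝ) [IsProbabilityMeasure μ] :
    MonotoneOn (quant μ) (Set.Ioo (0:ℝ) 1) := by
  intro a ha b hb hab
  exact csInf_le_csInf (quant_bddBelow μ ha.1) (quant_nonempty μ hb.2)
    (fun y hy => le_trans (ENNReal.ofReal_le_ofReal hab) hy)

lemma quant_aemeasurable (μ : Measure ℝ) [IsProbabilityMeasure μ] :
    AEMeasurable (quant μ) (volume.restrict (Set.Ioo (0:ℝ) 1)) :=
  aemeasurable_restrict_of_monotoneOn measurableSet_Ioo (quant_monoOn μ)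

lemma map_quant (μ : Measure ℝ) [IsProbabilityMeasure μ] :
    (volume.restrict (Set.Ioo (0:ℝ) 1)).map (quant μ) = μ := by
  have hae := quant_aemeasurable μ
  have huniv : ((volume.restrict (Set.Ioo (0:ℝ) 1)).map (quant μ)) Set.univ = 1 := by
    rw [Measure.map_apply_of_aemeasurable hae MeasurableSet.univ, Set.preimage_univ,
      Measure.restrict_apply_univ, Real.volume_Ioo]
    norm_num
  have : IsFiniteMeasure ((volume.restrict (Set.Ioo (0:ℝ) 1)).map (quant μ)) :=
    ⟨by rw [huniv]; exact ENNReal.one_lt_top⟩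
  refine Measure.ext_of_Iic _ _ (fun x => ?_)
  rw [Measure.map_apply_of_aemeasurable hae measurableSet_Iic,
    Measure.restrict_apply' measurableSet_Ioo]
  set c := (μ (Set.Iic x)).toReal with hc
  have hset : quant μ ⁻¹' Set.Iic x ∩ Set.Ioo 0 1 = Set.Iic c ∩ Set.Ioo 0 1 := by
    ext t
    simp only [Set.mem_inter_iff, Set.mem_preimage, Set.mem_Iic, Set.mem_Ioo,
      and_congr_left_iff]
    rintro ⟨ht0, ht1⟩
    rw [quant_le_iff μ ht0 ht1, ENNReal.ofReal_le_iff_le_toReal (measure_ne_top μ _)]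
  rw [hset]
  have hc0 : 0 ≤ c := ENNReal.toReal_nonneg
  rcases lt_or_ge c 1 with hc1 | hc1
  · have : Set.Iic c ∩ Set.Ioo 0 1 = Set.Ioc 0 c := by
      ext t
      simp only [Set.mem_inter_iff, Set.mem_Iic, Set.mem_Ioo, Set.mem_Ioc]
      constructor
      · rintro ⟨h1, h2, h3⟩; exact ⟨h2, h1⟩
      · rintro ⟨h1, h2⟩; exact ⟨h2, h1, lt_of_le_of_lt h2 hc1⟩
    rw [this, Real.volume_Ioc, sub_zero, hc, ENNReal.ofReal_toReal (measure_ne_top μ _)]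
  · have h1 : μ (Set.Iic x) = 1 := by
      refine le_antisymm prob_le_one ?_
      calc (1:ℝ≥0∞) = ENNReal.ofReal 1 := by norm_num
      _ ≤ ENNReal.ofReal c := ENNReal.ofReal_le_ofReal hc1
      _ = μ (Set.Iic x) := by rw [hc, ENNReal.ofReal_toReal (measure_ne_top μ _)]
    have : Set.Iic c ∩ Set.Ioo 0 1 = Set.Ioo 0 1 := by
      ext t
      simp only [Set.mem_inter_iff, Set.mem_Iic, Set.mem_Ioo]
      exact ⟨fun h => h.2, fun h => ⟨by linarith [h.2], h⟩⟩
    rw [this, Real.volume_Ioo, h1]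
    norm_num

lemma ofReal_toReal_sub {a b : ℝ≥0∞} (ha : a ≠ ⊤) (hb : b ≠ ⊤) :
    ENNReal.ofReal (a.toReal - b.toReal) = a - b := by
  rcases le_total b a with h | h
  · rw [ENNReal.ofReal_sub _ ENNReal.toReal_nonneg, ENNReal.ofReal_toReal ha,
      ENNReal.ofReal_toReal hb]
  · rw [tsub_eq_zero_of_le h, ENNReal.ofReal_eq_zero.2 (by
      linarith [ENNReal.toReal_mono hb h] : a.toReal - b.toReal ≤ 0)]

lemma Iio_eq_iUnion (u : ℝ) :
    Set.Iio u = ⋃ n : ℕ, Set.Iic (u - ((n:ℝ) + 1)⁻¹) := by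
  ext z
  simp only [Set.mem_Iio, Set.mem_iUnion, Set.mem_Iic]
  constructor
  · intro hz
    obtain ⟨n, hn⟩ := exists_nat_gt (u - z)⁻¹
    refine ⟨n, ?_⟩
    have h1 : ((n:ℝ) + 1)⁻¹ < u - z := by
      rw [inv_lt_comm₀ (by positivity) (by linarith)]
      linarith
    linarith
  · rintro ⟨n, hn⟩
    have : (0:ℝ) < ((n:ℝ) + 1)⁻¹ := by positivity
    linarith

lemma measure_Iio_eq (μ : Measure ℝ) (u : ℝ) :
    μ (Set.Iio u) = ⨆ n : ℕ, μ (Set.Iic (u - ((n:ℝ) + 1)⁻¹)) := by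
  rw [Iio_eq_iUnion u]
  refine Monotone.measure_iUnion (fun m n hmn => Set.Iic_subset_Iic.2 ?_)
  have h1 : ((n:ℝ) + 1)⁻¹ ≤ ((m:ℝ) + 1)⁻¹ := by
    have hmn' : ((m:ℝ) + 1) ≤ ((n:ℝ) + 1) := by
      have : (m:ℝ) ≤ (n:ℝ) := by exact_mod_cast hmn
      linarith
    exact inv_anti₀ (by positivity) hmn'
  linarith

lemma lebI_set (μ ν : Measure ℝ) [IsProbabilityMeasure μ] [IsProbabilityMeasure ν]
    {s u : ℝ} :
    volume ({t : ℝ | quant ν t ≤ s ∧ u ≤ quant μ t} ∩ Set.Ioo (0:ℝ) 1)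
      = ν (Set.Iic s) - μ (Set.Iio u) := by
  set Fm := (μ (Set.Iio u)).toReal with hFm
  set Gs := (ν (Set.Iic s)).toReal with hGs
  have hFm0 : 0 ≤ Fm := ENNReal.toReal_nonneg
  have hGs1 : Gs ≤ 1 := by
    rw [hGs]
    calc (ν (Set.Iic s)).toReal ≤ (1 : ℝ≥0∞).toReal :=
          ENNReal.toReal_mono ENNReal.one_ne_top prob_le_one
    _ = 1 := by simp
  have hupper : {t : ℝ | quant ν t ≤ s ∧ u ≤ quant μ t} ∩ Set.Ioo (0:ℝ) 1
      ⊆ Set.Icc Fm Gs := by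
    rintro t ⟨⟨hg, hf⟩, ht0, ht1⟩
    constructor
    · by_contra hc
      push_neg at hc
      have h1 : ENNReal.ofReal t < μ (Set.Iio u) := by
        have h2 : μ (Set.Iio u) = ENNReal.ofReal Fm :=
          (ENNReal.ofReal_toReal (measure_ne_top μ _)).symm
        rw [h2]
        exact (ENNReal.ofReal_lt_ofReal_iff (lt_of_le_of_lt ht0.le hc)).2 hc
      rw [measure_Iio_eq] at h1
      obtain ⟨n, hn⟩ := lt_iSup_iff.1 h1
      have h3 : quant μ t ≤ u - ((n:ℝ) + 1)⁻¹ :=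
        (quant_le_iff μ ht0 ht1 _).2 hn.le
      have h4 : (0:ℝ) < ((n:ℝ) + 1)⁻¹ := by positivity
      linarith
    · have h1 : ENNReal.ofReal t ≤ ν (Set.Iic s) := (quant_le_iff ν ht0 ht1 s).1 hg
      exact (ENNReal.ofReal_le_iff_le_toReal (measure_ne_top ν _)).1 h1
  have hlower : Set.Ioo Fm Gs ⊆
      {t : ℝ | quant ν t ≤ s ∧ u ≤ quant μ t} ∩ Set.Ioo (0:ℝ) 1 := by
    rintro t ⟨h1, h2⟩
    have ht0 : 0 < t := lt_of_le_of_lt hFm0 h1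
    have ht1 : t < 1 := lt_of_lt_of_le h2 hGs1
    refine ⟨⟨?_, ?_⟩, ht0, ht1⟩
    · refine (quant_le_iff ν ht0 ht1 s).2 ?_
      calc ENNReal.ofReal t ≤ ENNReal.ofReal Gs := ENNReal.ofReal_le_ofReal h2.le
      _ = ν (Set.Iic s) := ENNReal.ofReal_toReal (measure_ne_top ν _)
    · refine le_of_forall_lt fun v hv => ?_
      by_contra hc
      push_neg at hc
      have h3 : ENNReal.ofReal t ≤ μ (Set.Iic v) := (quant_le_iff μ ht0 ht1 v).1 hc
      have h4 : μ (Set.Iic v) ≤ μ (Set.Iio u) := measure_mono (Set.Iic_subset_Iio.2 hv)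
      have h5 : ENNReal.ofReal t ≤ ENNReal.ofReal Fm := by
        calc ENNReal.ofReal t ≤ μ (Set.Iio u) := le_trans h3 h4
        _ = ENNReal.ofReal Fm := (ENNReal.ofReal_toReal (measure_ne_top μ _)).symm
      have h6 : t ≤ Fm := (ENNReal.ofReal_le_ofReal_iff hFm0).1 h5
      linarith
  have hvol : volume ({t : ℝ | quant ν t ≤ s ∧ u ≤ quant μ t} ∩ Set.Ioo (0:ℝ) 1)
      = ENNReal.ofReal (Gs - Fm) := by
    refine le_antisymm ?_ ?_
    · calc volume ({t : ℝ | quant ν t ≤ s ∧ u ≤ quant μ t} ∩ Set.Ioo (0:ℝ) 1)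
          ≤ volume (Set.Icc Fm Gs) := measure_mono hupper
      _ = ENNReal.ofReal (Gs - Fm) := Real.volume_Icc
    · calc ENNReal.ofReal (Gs - Fm) = volume (Set.Ioo Fm Gs) := Real.volume_Ioo.symm
      _ ≤ _ := measure_mono hlower
  rw [hvol, hGs, hFm, ofReal_toReal_sub (measure_ne_top ν _) (measure_ne_top μ _)]

lemma costRep {p : ℝ} (hp : 1 < p) (η : Measure (ℝ × ℝ)) [IsProbabilityMeasure η] :
    ∫⁻ q, ENNReal.ofReal (|q.1 - q.2| ^ p) ∂η
      = ∫⁻ su : ℝ × ℝ, psi p su *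
          (η {q : ℝ × ℝ | q.2 ≤ su.1 ∧ su.2 ≤ q.1}
            + η {q : ℝ × ℝ | q.1 ≤ su.1 ∧ su.2 ≤ q.2}) := by
  have hE1 : MeasurableSet {z : (ℝ × ℝ) × (ℝ × ℝ) | z.1.2 ≤ z.2.1 ∧ z.2.2 ≤ z.1.1} :=
    (measurableSet_le measurable_fst.snd measurable_snd.fst).inter
      (measurableSet_le measurable_snd.snd measurable_fst.fst)
  have hE2 : MeasurableSet {z : (ℝ × ℝ) × (ℝ × ℝ) | z.1.1 ≤ z.2.1 ∧ z.2.2 ≤ z.1.2} :=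
    (measurableSet_le measurable_fst.fst measurable_snd.fst).inter
      (measurableSet_le measurable_snd.snd measurable_fst.snd)
  calc ∫⁻ q, ENNReal.ofReal (|q.1 - q.2| ^ p) ∂η
      = ∫⁻ q, ∫⁻ su : ℝ × ℝ, psi p su *
          ((D q.1 q.2).indicator 1 su + (D q.2 q.1).indicator 1 su) ∂volume ∂η :=
        lintegral_congr fun q => rep hp q
    _ = ∫⁻ su : ℝ × ℝ, ∫⁻ q, psi p su *
          ((D q.1 q.2).indicator 1 su + (D q.2 q.1).indicator 1 su) ∂η ∂volume := by
        refine lintegral_lintegral_swap ?_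
        have h1 : (Function.uncurry fun (q su : ℝ × ℝ) => psi p su *
            ((D q.1 q.2).indicator 1 su + (D q.2 q.1).indicator 1 su))
            = fun z : (ℝ × ℝ) × (ℝ × ℝ) => psi p z.2 *
              ({z : (ℝ × ℝ) × (ℝ × ℝ) | z.1.2 ≤ z.2.1 ∧ z.2.2 ≤ z.1.1}.indicator 1 z
                + {z : (ℝ × ℝ) × (ℝ × ℝ) | z.1.1 ≤ z.2.1 ∧ z.2.2 ≤ z.1.2}.indicator 1 z) := by
          funext z
          rcases z with ⟨q, su⟩
          simp only [Function.uncurry, Set.indicator_apply, D, Set.mem_setOf_eq, Pi.one_apply]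
        rw [h1]
        exact (((measurable_psi p).comp measurable_snd).mul
          ((measurable_one.indicator hE1).add (measurable_one.indicator hE2))).aemeasurable
    _ = ∫⁻ su : ℝ × ℝ, psi p su *
          (η {q : ℝ × ℝ | q.2 ≤ su.1 ∧ su.2 ≤ q.1}
            + η {q : ℝ × ℝ | q.1 ≤ su.1 ∧ su.2 ≤ q.2}) := by
        refine lintegral_congr fun su => ?_
        have hA : MeasurableSet {q : ℝ × ℝ | q.2 ≤ su.1 ∧ su.2 ≤ q.1} :=
          (measurableSet_le measurable_snd measurable_const).inter
            (measurableSet_le measurable_const measurable_fst)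
        have hB : MeasurableSet {q : ℝ × ℝ | q.1 ≤ su.1 ∧ su.2 ≤ q.2} :=
          (measurableSet_le measurable_fst measurable_const).inter
            (measurableSet_le measurable_const measurable_snd)
        have h2 : ∀ q : ℝ × ℝ, psi p su *
            ((D q.1 q.2).indicator 1 su + (D q.2 q.1).indicator 1 su)
            = psi p su * ({q : ℝ × ℝ | q.2 ≤ su.1 ∧ su.2 ≤ q.1}.indicator 1 q
                + {q : ℝ × ℝ | q.1 ≤ su.1 ∧ su.2 ≤ q.2}.indicator 1 q) := by
          intro q
          simp only [Set.indicator_apply, D, Set.mem_setOf_eq, Pi.one_apply]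
        rw [lintegral_congr h2,
          lintegral_const_mul (f := fun q => {q : ℝ × ℝ | q.2 ≤ su.1 ∧ su.2 ≤ q.1}.indicator 1 q
            + {q : ℝ × ℝ | q.1 ≤ su.1 ∧ su.2 ≤ q.2}.indicator 1 q) _ ((measurable_one.indicator hA).add (measurable_one.indicator hB)),
          lintegral_add_left (measurable_one.indicator hA),
          lintegral_indicator_one hA, lintegral_indicator_one hB]

end Wass19

open Wass19 in
/-- for probability measures `μ, ν` on `ℝ` with finite `p`-th
moments, the `p`-th power Wasserstein distance (infimum of the transport cost
over couplings) equals `∫₀¹ |F⁻¹(y) − G⁻¹(y)|^p dy`, where `F⁻¹` and `G⁻¹` are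
the generalized inverse distribution functions of `μ` and `ν`. -/
theorem one_dimensional_wasserstein_eq_quantile_integral
    (p : ℝ) (hp : 1 < p)
    (μ ν : Measure ℝ)
    (hμ : IsProbabilityMeasure μ) (hν : IsProbabilityMeasure ν)
    (hμmom : ∫⁻ y, ENNReal.ofReal (|y| ^ p) ∂μ < ⊤)
    (hνmom : ∫⁻ y, ENNReal.ofReal (|y| ^ p) ∂ν < ⊤) :
    (⨅ η : {η : Measure (ℝ × ℝ) //
        η.map Prod.fst = μ ∧ η.map Prod.snd = ν},
      ∫⁻ q, ENNReal.ofReal (|q.1 - q.2| ^ p) ∂(η.1))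
    = ∫⁻ t in Set.Ioo (0:ℝ) 1,
        ENNReal.ofReal
          (|sInf {y : ℝ | ENNReal.ofReal t ≤ μ (Set.Iic y)}
            - sInf {y : ℝ | ENNReal.ofReal t ≤ ν (Set.Iic y)}| ^ p) := by
  haveI := hμ; haveI := hν
  set T : ℝ → ℝ × ℝ := fun t => (quant μ t, quant ν t) with hTdef
  have hT : AEMeasurable T (volume.restrict (Set.Ioo (0:ℝ) 1)) :=
    (quant_aemeasurable μ).prodMk (quant_aemeasurable ν)
  set η₀ : Measure (ℝ × ℝ) := (volume.restrict (Set.Ioo (0:ℝ) 1)).map T with hη₀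
  have hfst : η₀.map Prod.fst = μ := by
    rw [hη₀, AEMeasurable.map_map_of_aemeasurable measurable_fst.aemeasurable hT]
    exact map_quant μ
  have hsnd : η₀.map Prod.snd = ν := by
    rw [hη₀, AEMeasurable.map_map_of_aemeasurable measurable_snd.aemeasurable hT]
    exact map_quant ν
  have hCmeas : Measurable (fun q : ℝ × ℝ => ENNReal.ofReal (|q.1 - q.2| ^ p)) :=
    (((measurable_fst.sub measurable_snd).abs).pow measurable_const).ennreal_ofReal
  have probOf : ∀ (η : Measure (ℝ × ℝ)), η.map Prod.fst = μ → IsProbabilityMeasure η := by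
    intro η h1
    constructor
    have h2 : η.map Prod.fst Set.univ = 1 := by rw [h1]; exact measure_univ
    rwa [Measure.map_apply measurable_fst MeasurableSet.univ, Set.preimage_univ] at h2
  haveI hη₀prob : IsProbabilityMeasure η₀ := probOf η₀ hfst
  have hRHS : (∫⁻ t in Set.Ioo (0:ℝ) 1,
        ENNReal.ofReal
          (|sInf {y : ℝ | ENNReal.ofReal t ≤ μ (Set.Iic y)}
            - sInf {y : ℝ | ENNReal.ofReal t ≤ ν (Set.Iic y)}| ^ p))
      = ∫⁻ q, ENNReal.ofReal (|q.1 - q.2| ^ p) ∂η₀ := by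
    rw [hη₀, lintegral_map' hCmeas.aemeasurable hT]
    rfl
  have heta0A : ∀ su : ℝ × ℝ, η₀ {q : ℝ × ℝ | q.2 ≤ su.1 ∧ su.2 ≤ q.1}
      = ν (Set.Iic su.1) - μ (Set.Iio su.2) := by
    intro su
    have hA : MeasurableSet {q : ℝ × ℝ | q.2 ≤ su.1 ∧ su.2 ≤ q.1} :=
      (measurableSet_le measurable_snd measurable_const).inter
        (measurableSet_le measurable_const measurable_fst)
    rw [hη₀, Measure.map_apply_of_aemeasurable hT hA,
      Measure.restrict_apply' measurableSet_Ioo]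
    exact lebI_set μ ν
  have heta0B : ∀ su : ℝ × ℝ, η₀ {q : ℝ × ℝ | q.1 ≤ su.1 ∧ su.2 ≤ q.2}
      = μ (Set.Iic su.1) - ν (Set.Iio su.2) := by
    intro su
    have hB : MeasurableSet {q : ℝ × ℝ | q.1 ≤ su.1 ∧ su.2 ≤ q.2} :=
      (measurableSet_le measurable_fst measurable_const).inter
        (measurableSet_le measurable_const measurable_snd)
    rw [hη₀, Measure.map_apply_of_aemeasurable hT hB,
      Measure.restrict_apply' measurableSet_Ioo]
    exact lebI_set ν μ
  refine le_antisymm ?_ ?_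
  · rw [hRHS]
    exact iInf_le (fun η' : {η : Measure (ℝ × ℝ) //
        η.map Prod.fst = μ ∧ η.map Prod.snd = ν} =>
      ∫⁻ q, ENNReal.ofReal (|q.1 - q.2| ^ p) ∂(η'.1)) ⟨η₀, hfst, hsnd⟩
  · rw [hRHS]
    refine le_iInf fun η' => ?_
    obtain ⟨η, h1, h2⟩ := η'
    haveI : IsProbabilityMeasure η := probOf η h1
    rw [costRep hp η₀, costRep hp η]
    refine lintegral_mono fun su => ?_
    by_cases hsu : su.1 < su.2
    · refine mul_le_mul_right (add_le_add ?_ ?_) _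
      · rw [heta0A su]
        refine tsub_le_iff_right.2 ?_
        have h3 : ν (Set.Iic su.1) = η {q : ℝ × ℝ | q.2 ≤ su.1} := by
          rw [← h2, Measure.map_apply measurable_snd measurableSet_Iic]
          rfl
        have h4 : μ (Set.Iio su.2) = η {q : ℝ × ℝ | q.1 < su.2} := by
          rw [← h1, Measure.map_apply measurable_fst measurableSet_Iio]
          rfl
        rw [h3, h4]
        have h5 : {q : ℝ × ℝ | q.2 ≤ su.1}
            ⊆ {q : ℝ × ℝ | q.2 ≤ su.1 ∧ su.2 ≤ q.1} ∪ {q : ℝ × ℝ | q.1 < su.2} := by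
          rintro q hq
          by_cases h6 : q.1 < su.2
          · exact Or.inr h6
          · exact Or.inl ⟨hq, not_lt.1 h6⟩
        exact le_trans (measure_mono h5) (measure_union_le _ _)
      · rw [heta0B su]
        refine tsub_le_iff_right.2 ?_
        have h3 : μ (Set.Iic su.1) = η {q : ℝ × ℝ | q.1 ≤ su.1} := by
          rw [← h1, Measure.map_apply measurable_fst measurableSet_Iic]
          rfl
        have h4 : ν (Set.Iio su.2) = η {q : ℝ × ℝ | q.2 < su.2} := by
          rw [← h2, Measure.map_apply measurable_snd measurableSet_Iio]
          rfl
        rw [h3, h4]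
        have h5 : {q : ℝ × ℝ | q.1 ≤ su.1}
            ⊆ {q : ℝ × ℝ | q.1 ≤ su.1 ∧ su.2 ≤ q.2} ∪ {q : ℝ × ℝ | q.2 < su.2} := by
          rintro q hq
          by_cases h6 : q.2 < su.2
          · exact Or.inr h6
          · exact Or.inl ⟨hq, not_lt.1 h6⟩
        exact le_trans (measure_mono h5) (measure_union_le _ _)
    · have hz : psi p su = 0 := by simp [psi, hsu]
      rw [hz, zero_mul, zero_mul]
end
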